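/- arXiv:2404.18853 — 9 statements merged into one kernel-verified Lean document; each statement's English description precedes it below -/
import Mathlib

section
/- For every σ ∈ ℕ∞^ℕ, one has φ̃(σ) = φ̃(g(σ)); that is, φ̃ = φ ∘ g on ℕ∞^ℕ, where φ is the restriction of φ̃ to Σ. -/
open scoped Classical

noncomputable section

/-- `ℕ∞`: the one-point compactification of the positive integers. -/
abbrev NInf : Type := OnePoint ℕ+

/-- View `NInf` as `Option ℕ+`. -/
def toOpt (m : NInf) : Option ℕ+ := m

/-- View `Option ℕ+` as `NInf`. -/
def ofOpt (o : Option ℕ+) : NInf := o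

/-- The reciprocal `1/m`, with the convention `1/∞ = 0`. -/
def rinv (m : NInf) : ℝ :=
  match toOpt m with
  | none => 0
  | some a => 1 / (a : ℝ)

/-- The finite continued fraction `[σ₁, …, σ_k]` computed with the convention `1/∞ = 0`. -/
def cfVal : ℕ → (ℕ → NInf) → ℝ
  | 0, _ => 0
  | k + 1, σ =>
    match toOpt (σ 0) with
    | none => 0
    | some a => 1 / ((a : ℝ) + cfVal k (fun i => σ (i + 1)))

/-- `φ̃(σ) = lim_k [σ₁, …, σ_k]`. -/
def phiTilde (σ : ℕ → NInf) : ℝ := Filter.limUnder Filter.atTop (fun k => cfVal k σ)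

/-- The Gauss map `T̄`, with `T̄(0) = 0`. -/
def Tbar (x : ℝ) : ℝ := if x = 0 then 0 else Int.fract (1 / x)

/-- The first partial quotient `d̄₁(x) = ⌊1/x⌋`, with `d̄₁(0) = ∞`. -/
def dbar (x : ℝ) : NInf := if x = 0 then OnePoint.infty else ((⌊1 / x⌋₊.toPNat' : ℕ+) : NInf)

/-- `f(x) = (d̄₁(x), d̄₂(x), …)`, the sequence of partial quotients (0-indexed:
`cfSeq x k = d̄_{k+1}(x)`). -/
def cfSeq (x : ℝ) : ℕ → NInf := fun k => dbar (Tbar^[k] x)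

/-- `Σ_n`: sequences whose first `n` terms are finite and whose remaining terms are `∞`. -/
def SigmaIdx (n : ℕ) : Set (ℕ → NInf) :=
  {σ | (∀ k < n, σ k ≠ OnePoint.infty) ∧ ∀ k, n ≤ k → σ k = OnePoint.infty}

/-- `Σ_∞ = ℕ^ℕ`: sequences all of whose terms are finite. -/
def SigmaInfSet : Set (ℕ → NInf) := {σ | ∀ k, σ k ≠ OnePoint.infty}

/-- `Σ = Σ_∞ ∪ ⋃ₙ Σ_n` (note `Σ₀ = SigmaIdx 0`). -/
def SigmaSet : Set (ℕ → NInf) := SigmaInfSet ∪ ⋃ n : ℕ, SigmaIdx n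

/-- `σ^{(n)}`: keep the first `n` terms, replace the rest by `∞`. -/
def trunc (n : ℕ) (σ : ℕ → NInf) : ℕ → NInf := fun k => if k < n then σ k else OnePoint.infty

/-- The map `g` forgetting everything after the first `∞`. -/
def gmap (σ : ℕ → NInf) : ℕ → NInf :=
  if h : ∃ k, σ k = OnePoint.infty then trunc (Nat.find h) σ else σ

theorem gmap_mem (σ : ℕ → NInf) : gmap σ ∈ SigmaSet := by
  unfold gmap
  split_ifs with h
  · refine Or.inr (Set.mem_iUnion.mpr ⟨Nat.find h, ?_, ?_⟩)
    · intro k hk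
      simpa [trunc, hk] using Nat.find_min h hk
    · intro k hk
      simp [trunc, Nat.not_lt.mpr hk]
  · exact Or.inl fun k hk => h ⟨k, hk⟩

theorem cfSeq_mem (x : ℝ) : cfSeq x ∈ SigmaSet := by
  by_cases h : ∃ k, Tbar^[k] x = 0
  · refine Or.inr (Set.mem_iUnion.mpr ⟨Nat.find h, ?_, ?_⟩)
    · intro k hk
      have hne : Tbar^[k] x ≠ 0 := Nat.find_min h hk
      simp [cfSeq, dbar, hne]
    · intro k hk
      have h0 : Tbar^[Nat.find h] x = 0 := Nat.find_spec h
      have : Tbar^[k] x = 0 := by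
        have := Function.iterate_add_apply Tbar (k - Nat.find h) (Nat.find h) x
        rw [Nat.sub_add_cancel hk] at this
        rw [this, h0]
        exact Function.iterate_fixed (by simp [Tbar]) _
      simp [cfSeq, dbar, this]
  · refine Or.inl fun k hk => ?_
    have hne : Tbar^[k] x ≠ 0 := fun h0 => h ⟨k, h0⟩
    simp [cfSeq, dbar, hne] at hk

/-- The space `Σ` (as a type). -/
def Sig : Type := {σ : ℕ → NInf // σ ∈ SigmaSet}

def Sig.mk (σ : ℕ → NInf) (h : σ ∈ SigmaSet) : Sig := ⟨σ, h⟩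

def Sig.val (s : Sig) : ℕ → NInf := Subtype.val s

/-- `g`, viewed as a map onto `Σ`. -/
def gS (σ : ℕ → NInf) : Sig := Sig.mk (gmap σ) (gmap_mem σ)

/-- `T_Σ`: the topology on `Σ` coinduced by `g` from the product topology. -/
instance : TopologicalSpace Sig := TopologicalSpace.coinduced gS inferInstance

/-- `f`, viewed as a map into `Σ`. -/
def fS (x : ℝ) : Sig := Sig.mk (cfSeq x) (cfSeq_mem x)

/-- The metric `ρ` on `ℕ∞`. -/
def rho (m n : NInf) : ℝ := if m = n then 0 else rinv m + rinv n

/-- The metric `ρ^ℕ` on `ℕ∞^ℕ`. -/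
def rhoN (σ τ : ℕ → NInf) : ℝ := ∑' k : ℕ, rho (σ k) (τ k) / (Nat.fib (k + 1) : ℝ) ^ 2

/-- Predecessor on `NInf` (finite part). -/
def predNInf (m : NInf) : NInf := ofOpt ((toOpt m).map fun a => a - 1)

/-- The second continued fraction expansion
`(d̄₁(x), …, d̄_{n-1}(x), d̄_n(x) - 1, 1, ∞, ∞, …)` of a rational `x ∈ (0,1)` with
`f(x) ∈ Σ_n`. -/
def tauOf (x : ℝ) (n : ℕ) : ℕ → NInf := fun k =>
  if k + 1 < n then cfSeq x k
  else if k + 1 = n then predNInf (cfSeq x k)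
  else if k = n then ((1 : ℕ+) : NInf)
  else OnePoint.infty

end

lemma cfVal_congr : ∀ (k : ℕ) (σ τ : ℕ → NInf),
    (∀ i < k, (∀ j < i, σ j ≠ OnePoint.infty) → σ i = τ i) →
    cfVal k σ = cfVal k τ := by
  intro k
  induction k with
  | zero => intro σ τ _; rfl
  | succ k ih =>
    intro σ τ h
    have h0 : σ 0 = τ 0 := h 0 (Nat.succ_pos k) (by intro j hj; omega)
    unfold cfVal
    rw [← h0]
    cases hc : toOpt (σ 0) with
    | none => rfl
    | some a =>
      have hne : σ 0 ≠ OnePoint.infty := by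
        intro he
        rw [he] at hc
        exact Option.some_ne_none a (show (none : Option ℕ+) = some a from hc).symm
      have : cfVal k (fun i => σ (i + 1)) = cfVal k (fun i => τ (i + 1)) := by
        apply ih
        intro i hi hj
        apply h (i + 1) (by omega)
        intro j hjlt
        cases j with
        | zero => exact hne
        | succ j' => exact hj j' (by omega)
      rw [this]

/-- `φ̃ = φ ∘ g` on `ℕ∞^ℕ`, i.e. `φ̃(σ) = φ̃(g(σ))` for every `σ`. -/
theorem stmt7 : ∀ σ : ℕ → NInf, phiTilde σ = phiTilde (gmap σ) := by
  intro σ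
  unfold phiTilde
  congr 1
  funext k
  apply cfVal_congr
  intro i _ hj
  unfold gmap
  split_ifs with h
  · have hi : i ≤ Nat.find h := by
      by_contra hcon
      exact hj (Nat.find h) (by omega) (Nat.find_spec h)
    rcases lt_or_eq_of_le hi with hlt | heq
    · simp [trunc, hlt]
    · have : σ i = OnePoint.infty := heq ▸ Nat.find_spec h
      subst heq; simp [trunc, this]
  · rfl
end

section
/- For all σ, τ ∈ ℕ∞^ℕ, the inequality |φ̃(σ) − φ̃(τ)| ≤ ρ^ℕ(σ, τ) holds; in particular, φ̃ : (ℕ∞^ℕ, ρ^ℕ) → [0,1] is Lipschitz with constant 1, hence continuous. -/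
open scoped Classical

noncomputable section Aux
open Filter

namespace S8

def shift (σ : ℕ → NInf) : ℕ → NInf := fun i => σ (i + 1)

def aR (σ : ℕ → NInf) (i : ℕ) : ℝ := (toOpt (σ i)).elim 1 (fun a => (a : ℝ))

lemma one_le_aR (σ : ℕ → NInf) (i : ℕ) : 1 ≤ aR σ i := by
  unfold aR
  rcases h : toOpt (σ i) with _ | a <;> simp [h]
  exact_mod_cast a.one_le

lemma toOpt_none_iff (m : NInf) : toOpt m = none ↔ m = OnePoint.infty := Iff.rfl

lemma cfVal_succ (k : ℕ) (σ : ℕ → NInf) :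
    cfVal (k+1) σ = match toOpt (σ 0) with
      | none => 0
      | some a => 1 / ((a : ℝ) + cfVal k (shift σ)) := rfl

lemma cfVal_succ_infty (k : ℕ) (σ : ℕ → NInf) (h : σ 0 = OnePoint.infty) :
    cfVal (k+1) σ = 0 := by
  rw [cfVal_succ]
  have : toOpt (σ 0) = none := h ▸ rfl
  rw [this]

lemma cfVal_succ_some (k : ℕ) (σ : ℕ → NInf) (a : ℕ+) (h : toOpt (σ 0) = some a) :
    cfVal (k+1) σ = 1 / ((a : ℝ) + cfVal k (shift σ)) := by
  rw [cfVal_succ, h]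

lemma cfVal_nonneg (k : ℕ) (σ : ℕ → NInf) : 0 ≤ cfVal k σ := by
  induction k generalizing σ with
  | zero => simp [cfVal]
  | succ k ih =>
    rcases h : toOpt (σ 0) with _ | a
    · rw [cfVal_succ_infty _ _ h]
    · rw [cfVal_succ_some _ _ _ h]
      have h1 : (1:ℝ) ≤ (a:ℝ) := by exact_mod_cast a.one_le
      have h2 := ih (shift σ)
      positivity

lemma cfVal_le_rinv (k : ℕ) (σ : ℕ → NInf) : cfVal k σ ≤ rinv (σ 0) := by
  have hr : 0 ≤ rinv (σ 0) := by
    unfold rinv; rcases h : toOpt (σ 0) with _ | a <;> simp [h]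
  cases k with
  | zero => simpa [cfVal] using hr
  | succ k =>
    rcases h : toOpt (σ 0) with _ | a
    · rw [cfVal_succ_infty _ _ h]; exact hr
    · rw [cfVal_succ_some _ _ _ h]
      have : rinv (σ 0) = 1 / (a:ℝ) := by unfold rinv; rw [h]
      rw [this]
      have h1 : (0:ℝ) < (a:ℝ) := by exact_mod_cast a.pos
      have h2 := cfVal_nonneg k (shift σ)
      apply one_div_le_one_div_of_le h1
      linarith

lemma cfVal_le_one (k : ℕ) (σ : ℕ → NInf) : cfVal k σ ≤ 1 := by
  refine le_trans (cfVal_le_rinv k σ) ?_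
  unfold rinv; rcases h : toOpt (σ 0) with _ | a <;> simp [h]
  rw [inv_le_one_iff₀]
  right; exact_mod_cast a.one_le

lemma rinv_nonneg (m : NInf) : 0 ≤ rinv m := by
  unfold rinv; rcases h : toOpt m with _ | a <;> simp [h]

lemma rinv_le_one (m : NInf) : rinv m ≤ 1 := by
  unfold rinv; rcases h : toOpt m with _ | a <;> simp [h]
  rw [inv_le_one_iff₀]; right; exact_mod_cast a.one_le

/-- evaluation of the continued fraction with prefix `σ₀,…,σ_{j-1}` and `s` plugged at depth j,
inserting from the back. -/
def eval (σ : ℕ → NInf) : ℕ → ℝ → ℝ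
  | 0 => id
  | (j+1) => fun s => eval σ j (1 / (aR σ j + s))

/-- continuant denominators: `qq σ (n+1)` is the denominator of `[σ₀,…,σ_{n-1}]`. -/
def qq (σ : ℕ → NInf) : ℕ → ℝ
  | 0 => 0
  | 1 => 1
  | (n+2) => aR σ n * qq σ (n+1) + qq σ n

lemma fib_le_qq (σ : ℕ → NInf) : ∀ n, (Nat.fib n : ℝ) ≤ qq σ n ∧ 0 ≤ qq σ n
  | 0 => by simp [qq]
  | 1 => by simp [qq]
  | (n+2) => by
    obtain ⟨h1, h1'⟩ := fib_le_qq σ (n+1)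
    obtain ⟨h0, h0'⟩ := fib_le_qq σ n
    have ha := one_le_aR σ n
    constructor
    · rw [qq, Nat.fib_add_two]
      push_cast
      nlinarith
    · rw [qq]; nlinarith

lemma one_le_qq_succ (σ : ℕ → NInf) (n : ℕ) : 1 ≤ qq σ (n+1) := by
  have := (fib_le_qq σ (n+1)).1
  have hf : (1:ℝ) ≤ (Nat.fib (n+1) : ℝ) := by
    exact_mod_cast Nat.fib_pos.mpr n.succ_pos
  linarith

/-- the key determinant identity. -/
lemma eval_sub_eval (σ : ℕ → NInf) : ∀ (j : ℕ) (s t : ℝ), 0 ≤ s → 0 ≤ t →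
    |eval σ j s - eval σ j t| * ((qq σ (j+1) + qq σ j * s) * (qq σ (j+1) + qq σ j * t))
      = |s - t|
  | 0, s, t, hs, ht => by simp [eval, qq]
  | (j+1), s, t, hs, ht => by
    have ha := one_le_aR σ j
    have hs' : (0:ℝ) ≤ 1 / (aR σ j + s) := by positivity
    have ht' : (0:ℝ) ≤ 1 / (aR σ j + t) := by positivity
    have key := eval_sub_eval σ j _ _ hs' ht'
    have hq1 := one_le_qq_succ σ j
    have hq0 := (fib_le_qq σ j).2
    have has : (0:ℝ) < aR σ j + s := by linarith
    have hat : (0:ℝ) < aR σ j + t := by linarith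
    have e1 : eval σ (j+1) s = eval σ j (1 / (aR σ j + s)) := rfl
    have e2 : eval σ (j+1) t = eval σ j (1 / (aR σ j + t)) := rfl
    have d1 : (qq σ (j+1) + qq σ j * (1 / (aR σ j + s))) * (aR σ j + s)
        = qq σ (j+2) + qq σ (j+1) * s := by
      rw [qq]; field_simp; ring
    have d2 : (qq σ (j+1) + qq σ j * (1 / (aR σ j + t))) * (aR σ j + t)
        = qq σ (j+2) + qq σ (j+1) * t := by
      rw [qq]; field_simp; ring
    have habs : |1 / (aR σ j + s) - 1 / (aR σ j + t)| = |s - t| / ((aR σ j + s) * (aR σ j + t)) := by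
      rw [div_sub_div _ _ (ne_of_gt has) (ne_of_gt hat)]
      rw [abs_div, abs_of_pos (mul_pos has hat)]
      congr 1
      have h9 : (1:ℝ) * (aR σ j + t) - (aR σ j + s) * 1 = -(s - t) := by ring
      rw [h9, abs_neg]
    rw [e1, e2, ← d1, ← d2]
    calc |eval σ j (1 / (aR σ j + s)) - eval σ j (1 / (aR σ j + t))| *
          ((qq σ (j+1) + qq σ j * (1 / (aR σ j + s))) * (aR σ j + s) *
            ((qq σ (j+1) + qq σ j * (1 / (aR σ j + t))) * (aR σ j + t)))
        = |eval σ j (1 / (aR σ j + s)) - eval σ j (1 / (aR σ j + t))| *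
          ((qq σ (j+1) + qq σ j * (1 / (aR σ j + s))) *
            (qq σ (j+1) + qq σ j * (1 / (aR σ j + t)))) * ((aR σ j + s) * (aR σ j + t)) := by ring
      _ = |1 / (aR σ j + s) - 1 / (aR σ j + t)| * ((aR σ j + s) * (aR σ j + t)) := by rw [key]
      _ = |s - t| := by rw [habs]; exact div_mul_cancel₀ _ (ne_of_gt (mul_pos has hat))

lemma one_le_fib_cast (j : ℕ) : (1:ℝ) ≤ (Nat.fib (j+1) : ℝ) := by
  exact_mod_cast Nat.fib_pos.mpr j.succ_pos

lemma eval_lip (σ : ℕ → NInf) (j : ℕ) {s t : ℝ} (hs : 0 ≤ s) (ht : 0 ≤ t) :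
    |eval σ j s - eval σ j t| ≤ |s - t| / (Nat.fib (j+1) : ℝ)^2 := by
  have key := eval_sub_eval σ j s t hs ht
  have hfq := (fib_le_qq σ (j+1)).1
  have hq0 := (fib_le_qq σ j).2
  have hf1 := one_le_fib_cast j
  have hDs : (Nat.fib (j+1) : ℝ) ≤ qq σ (j+1) + qq σ j * s := by nlinarith
  have hDt : (Nat.fib (j+1) : ℝ) ≤ qq σ (j+1) + qq σ j * t := by nlinarith
  have habs : (0:ℝ) ≤ |eval σ j s - eval σ j t| := abs_nonneg _
  rw [le_div_iff₀ (by positivity)]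
  calc |eval σ j s - eval σ j t| * (Nat.fib (j+1) : ℝ)^2
      ≤ |eval σ j s - eval σ j t| * ((qq σ (j+1) + qq σ j * s) * (qq σ (j+1) + qq σ j * t)) := by
        have hprod : (Nat.fib (j+1) : ℝ)^2 ≤ (qq σ (j+1) + qq σ j * s) * (qq σ (j+1) + qq σ j * t) := by
          nlinarith
        exact mul_le_mul_of_nonneg_left hprod habs
    _ = |s - t| := key

lemma eval_congr {σ τ : ℕ → NInf} : ∀ (j : ℕ), (∀ i < j, σ i = τ i) → ∀ s, eval σ j s = eval τ j s
  | 0, _, s => rfl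
  | (j+1), h, s => by
    have ha : aR σ j = aR τ j := by unfold aR; rw [h j (Nat.lt_succ_self j)]
    show eval σ j (1 / (aR σ j + s)) = eval τ j (1 / (aR τ j + s))
    rw [ha, eval_congr j (fun i hi => h i (Nat.lt_succ_of_lt hi))]

lemma eval_front (σ : ℕ → NInf) : ∀ (j : ℕ) (s : ℝ),
    eval σ (j+1) s = 1 / (aR σ 0 + eval (shift σ) j s)
  | 0, s => rfl
  | (j+1), s => by
    show eval σ (j+1) (1 / (aR σ (j+1) + s)) = _
    rw [eval_front σ j]
    rfl

lemma shift_iterate (σ : ℕ → NInf) : ∀ (n : ℕ) (i : ℕ), (shift^[n] σ) i = σ (i + n)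
  | 0, i => rfl
  | (n+1), i => by
    rw [Function.iterate_succ_apply]
    rw [shift_iterate (shift σ) n i]
    show σ (i + n + 1) = σ (i + (n + 1))
    congr 1

lemma aR_of_some {σ : ℕ → NInf} {a : ℕ+} (h : toOpt (σ 0) = some a) : aR σ 0 = (a : ℝ) := by
  unfold aR; rw [h]; rfl

lemma cfVal_eval {σ : ℕ → NInf} : ∀ (j : ℕ), (∀ i < j, σ i ≠ OnePoint.infty) → ∀ k,
    cfVal (j + k) σ = eval σ j (cfVal k (shift^[j] σ)) := by
  intro j
  induction j generalizing σ with
  | zero => intro _ k; simp [eval]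
  | succ j ih =>
    intro h k
    have h0 : σ 0 ≠ OnePoint.infty := h 0 (Nat.succ_pos j)
    have : toOpt (σ 0) ≠ none := fun hn => h0 ((toOpt_none_iff (σ 0)).mp hn)
    rcases ha : toOpt (σ 0) with _ | a
    · exact absurd ha this
    have hstep : j + 1 + k = (j + k) + 1 := by omega
    rw [hstep, cfVal_succ_some _ _ _ ha]
    rw [ih (σ := shift σ) (fun i hi => h (i+1) (by omega)) k]
    rw [eval_front, aR_of_some ha, Function.iterate_succ_apply]

lemma cfVal_zero_of_infty {σ : ℕ → NInf} (h : σ 0 = OnePoint.infty) (k : ℕ) : cfVal k σ = 0 := by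
  cases k with
  | zero => rfl
  | succ k => exact cfVal_succ_infty _ _ h

lemma cfVal_const_of_infty {σ : ℕ → NInf} {n : ℕ} (hn : σ n = OnePoint.infty)
    (hfin : ∀ i < n, σ i ≠ OnePoint.infty) {k : ℕ} (hk : n ≤ k) :
    cfVal k σ = eval σ n 0 := by
  obtain ⟨m, rfl⟩ : ∃ m, k = n + m := ⟨k - n, by omega⟩
  rw [cfVal_eval n hfin m]
  congr 1
  apply cfVal_zero_of_infty
  rw [shift_iterate]
  simpa using hn

lemma cfVal_diff (σ : ℕ → NInf) (j k k' : ℕ) (hk : j ≤ k) (hk' : j ≤ k') :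
    |cfVal k σ - cfVal k' σ| ≤ 1 / (Nat.fib (j+1) : ℝ)^2 := by
  by_cases hfin : ∀ i < j, σ i ≠ OnePoint.infty
  · obtain ⟨m, rfl⟩ : ∃ m, k = j + m := ⟨k - j, by omega⟩
    obtain ⟨m', rfl⟩ : ∃ m', k' = j + m' := ⟨k' - j, by omega⟩
    rw [cfVal_eval j hfin m, cfVal_eval j hfin m']
    refine le_trans (eval_lip σ j (cfVal_nonneg _ _) (cfVal_nonneg _ _)) ?_
    have h1 : |cfVal m (shift^[j] σ) - cfVal m' (shift^[j] σ)| ≤ 1 := by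
      rw [abs_le]
      constructor
      · have := cfVal_le_one m' (shift^[j] σ); have := cfVal_nonneg m (shift^[j] σ); linarith
      · have := cfVal_le_one m (shift^[j] σ); have := cfVal_nonneg m' (shift^[j] σ); linarith
    have hf := one_le_fib_cast j
    apply div_le_div_of_nonneg_right h1 (by positivity) |>.trans_eq rfl
  · push_neg at hfin
    obtain ⟨i, hij, hi⟩ := hfin
    have hex : ∃ i, σ i = OnePoint.infty := ⟨i, hi⟩
    set n := Nat.find hex with hn
    have hninf : σ n = OnePoint.infty := Nat.find_spec hex
    have hnlt : n < j := lt_of_le_of_lt (Nat.find_min' hex hi) hij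
    have hpre : ∀ i' < n, σ i' ≠ OnePoint.infty := fun i' hi' => Nat.find_min hex hi'
    rw [cfVal_const_of_infty hninf hpre (le_trans (le_of_lt hnlt) hk),
        cfVal_const_of_infty hninf hpre (le_trans (le_of_lt hnlt) hk')]
    rw [sub_self, abs_zero]
    positivity

lemma two_pow_le_fib_sq : ∀ n : ℕ, 2^n ≤ 2 * (Nat.fib (n+1))^2
  | 0 => by norm_num
  | 1 => by norm_num
  | (n+2) => by
    have ih := two_pow_le_fib_sq n
    have h1 : Nat.fib (n+3) = Nat.fib (n+1) + Nat.fib (n+2) := Nat.fib_add_two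
    have h2 : Nat.fib (n+1) ≤ Nat.fib (n+2) := Nat.fib_le_fib_succ
    have h : 2 * Nat.fib (n+1) ≤ Nat.fib (n+3) := by omega
    calc 2^(n+2) = 4 * 2^n := by ring
      _ ≤ 4 * (2 * (Nat.fib (n+1))^2) := by omega
      _ = 2 * (2 * Nat.fib (n+1))^2 := by ring
      _ ≤ 2 * (Nat.fib (n+3))^2 := by
          have := Nat.pow_le_pow_left h 2
          omega

lemma bound_le (n : ℕ) : 1 / (Nat.fib (n+1) : ℝ)^2 ≤ 4 * (1/2)^n := by
  have hf := one_le_fib_cast n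
  have h1 : (0:ℝ) < (Nat.fib (n+1) : ℝ)^2 := by positivity
  have h2 : (2:ℝ)^n ≤ 2 * (Nat.fib (n+1) : ℝ)^2 := by exact_mod_cast two_pow_le_fib_sq n
  have h4 : (0:ℝ) < (2:ℝ)^n := by positivity
  have hr : (4:ℝ) * ((1:ℝ)/2)^n = 4 / 2^n := by rw [div_pow, one_pow]; ring
  rw [hr, div_le_div_iff₀ h1 h4]
  nlinarith

lemma tendsto_bound : Filter.Tendsto (fun n : ℕ => 1 / (Nat.fib (n+1) : ℝ)^2) atTop (nhds 0) := by
  have hg : Filter.Tendsto (fun n : ℕ => (4:ℝ) * (1/2)^n) atTop (nhds 0) := by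
    have := tendsto_pow_atTop_nhds_zero_of_lt_one (by norm_num : (0:ℝ) ≤ 1/2) (by norm_num)
    simpa using this.const_mul 4
  apply squeeze_zero (fun n => by positivity) bound_le hg

lemma tendsto_cfVal (σ : ℕ → NInf) :
    Filter.Tendsto (fun k => cfVal k σ) atTop (nhds (phiTilde σ)) := by
  have hc : CauchySeq (fun k => cfVal k σ) := by
    apply cauchySeq_of_le_tendsto_0 (fun n => 1 / (Nat.fib (n+1) : ℝ)^2)
    · intro n m N hn hm
      simpa [Real.dist_eq] using cfVal_diff σ N n m hn hm
    · exact tendsto_bound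
  obtain ⟨L, hL⟩ := cauchySeq_tendsto_of_complete hc
  have : phiTilde σ = L := hL.limUnder_eq
  rw [show phiTilde σ = limUnder atTop (fun k => cfVal k σ) from rfl, hL.limUnder_eq]
  exact hL

lemma phiTilde_sub_cfVal (σ : ℕ → NInf) (j : ℕ) :
    |phiTilde σ - cfVal j σ| ≤ 1 / (Nat.fib (j+1) : ℝ)^2 := by
  have ht : Filter.Tendsto (fun k => |cfVal k σ - cfVal j σ|) atTop
      (nhds |phiTilde σ - cfVal j σ|) := ((tendsto_cfVal σ).sub_const _).abs
  apply le_of_tendsto ht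
  filter_upwards [eventually_ge_atTop j] with k hk
  exact cfVal_diff σ j k j hk le_rfl

lemma rho_nonneg (m n : NInf) : 0 ≤ rho m n := by
  unfold rho; split_ifs
  · exact le_refl 0
  · exact add_nonneg (rinv_nonneg m) (rinv_nonneg n)

lemma rho_le_two (m n : NInf) : rho m n ≤ 2 := by
  unfold rho; split_ifs
  · norm_num
  · have := rinv_le_one m; have := rinv_le_one n; linarith

lemma summable_rhoN (σ τ : ℕ → NInf) :
    Summable (fun k => rho (σ k) (τ k) / (Nat.fib (k+1) : ℝ)^2) := by
  have hs : Summable (fun k : ℕ => (8:ℝ) * (1/2)^k) :=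
    (summable_geometric_of_lt_one (by norm_num) (by norm_num)).mul_left 8
  refine Summable.of_nonneg_of_le
    (fun k => div_nonneg (rho_nonneg _ _) (by positivity)) (fun k => ?_) hs
  have hf := one_le_fib_cast k
  have h1 : rho (σ k) (τ k) / (Nat.fib (k+1) : ℝ)^2 ≤ 2 / (Nat.fib (k+1) : ℝ)^2 := by
    gcongr
    exact rho_le_two _ _
  refine h1.trans ?_
  have hb := bound_le k
  calc (2:ℝ) / (Nat.fib (k+1) : ℝ)^2 = 2 * (1 / (Nat.fib (k+1) : ℝ)^2) := by ring
    _ ≤ 2 * (4 * (1/2)^k) := by nlinarith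
    _ = 8 * (1/2)^k := by ring

lemma rho_eq_of_ne {m n : NInf} (h : m ≠ n) : rho m n = rinv m + rinv n := by
  unfold rho; rw [if_neg h]

lemma abs_phi_le (σ τ : ℕ → NInf) : |phiTilde σ - phiTilde τ| ≤ rhoN σ τ := by
  have hterm_nonneg : ∀ k, 0 ≤ rho (σ k) (τ k) / (Nat.fib (k+1) : ℝ)^2 :=
    fun k => div_nonneg (rho_nonneg _ _) (by positivity)
  by_cases heq : σ = τ
  · subst heq
    rw [sub_self, abs_zero]
    exact tsum_nonneg hterm_nonneg
  · have hex : ∃ k, σ k ≠ τ k := by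
      by_contra h; push_neg at h; exact heq (funext h)
    set j := Nat.find hex with hjdef
    have hj : σ j ≠ τ j := Nat.find_spec hex
    have hpre : ∀ i < j, σ i = τ i := fun i hi => not_not.mp (Nat.find_min hex hi)
    have hle : rho (σ j) (τ j) / (Nat.fib (j+1) : ℝ)^2 ≤ rhoN σ τ :=
      Summable.le_tsum (summable_rhoN σ τ) j (fun i _ => hterm_nonneg i)
    refine le_trans ?_ hle
    by_cases hfin : ∀ i < j, σ i ≠ OnePoint.infty
    · have hfinτ : ∀ i < j, τ i ≠ OnePoint.infty := fun i hi => hpre i hi ▸ hfin i hi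
      have key : ∀ m, j ≤ m →
          |cfVal m σ - cfVal m τ| ≤ rho (σ j) (τ j) / (Nat.fib (j+1) : ℝ)^2 := by
        intro m hm
        obtain ⟨k, rfl⟩ : ∃ k, m = j + k := ⟨m - j, by omega⟩
        rw [cfVal_eval j hfin k, cfVal_eval j hfinτ k, ← eval_congr j hpre]
        have hs0 := cfVal_nonneg k (shift^[j] σ)
        have ht0 := cfVal_nonneg k (shift^[j] τ)
        refine (eval_lip σ j hs0 ht0).trans ?_
        have hsb : cfVal k (shift^[j] σ) ≤ rinv (σ j) := by
          have := cfVal_le_rinv k (shift^[j] σ)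
          rwa [shift_iterate, Nat.zero_add] at this
        have htb : cfVal k (shift^[j] τ) ≤ rinv (τ j) := by
          have := cfVal_le_rinv k (shift^[j] τ)
          rwa [shift_iterate, Nat.zero_add] at this
        rw [rho_eq_of_ne hj]
        gcongr
        have habs : |cfVal k (shift^[j] σ) - cfVal k (shift^[j] τ)|
            ≤ cfVal k (shift^[j] σ) + cfVal k (shift^[j] τ) := by
          rw [abs_sub_le_iff]; constructor <;> linarith
        refine habs.trans ?_
        exact add_le_add hsb htb
      have ht : Filter.Tendsto (fun m => |cfVal m σ - cfVal m τ|) atTop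
          (nhds |phiTilde σ - phiTilde τ|) := ((tendsto_cfVal σ).sub (tendsto_cfVal τ)).abs
      apply le_of_tendsto ht
      filter_upwards [eventually_ge_atTop j] with m hm
      exact key m hm
    · push_neg at hfin
      obtain ⟨i, hij, hi⟩ := hfin
      have hex2 : ∃ i, σ i = OnePoint.infty := ⟨i, hi⟩
      set n := Nat.find hex2 with hndef
      have hninf : σ n = OnePoint.infty := Nat.find_spec hex2
      have hnlt : n < j := lt_of_le_of_lt (Nat.find_min' hex2 hi) hij
      have hpreσ : ∀ i' < n, σ i' ≠ OnePoint.infty := fun i' hi' => Nat.find_min hex2 hi'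
      have hninfτ : τ n = OnePoint.infty := (hpre n hnlt) ▸ hninf
      have hpreτ : ∀ i' < n, τ i' ≠ OnePoint.infty := fun i' hi' =>
        (hpre i' (lt_trans hi' hnlt)) ▸ hpreσ i' hi'
      have hφσ : phiTilde σ = eval σ n 0 := by
        have hconst : Filter.Tendsto (fun k => cfVal k σ) atTop (nhds (eval σ n 0)) := by
          apply Filter.Tendsto.congr' _ tendsto_const_nhds
          filter_upwards [eventually_ge_atTop n] with k hk
          exact (cfVal_const_of_infty hninf hpreσ hk).symm
        exact tendsto_nhds_unique (tendsto_cfVal σ) hconst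
      have hφτ : phiTilde τ = eval τ n 0 := by
        have hconst : Filter.Tendsto (fun k => cfVal k τ) atTop (nhds (eval τ n 0)) := by
          apply Filter.Tendsto.congr' _ tendsto_const_nhds
          filter_upwards [eventually_ge_atTop n] with k hk
          exact (cfVal_const_of_infty hninfτ hpreτ hk).symm
        exact tendsto_nhds_unique (tendsto_cfVal τ) hconst
      rw [hφσ, hφτ, eval_congr n (fun i' hi' => hpre i' (lt_trans hi' hnlt)) 0,
        sub_self, abs_zero]
      exact hterm_nonneg j

lemma continuous_rinv : Continuous rinv := by
  rw [OnePoint.continuous_iff_from_discrete]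
  have hinf : rinv OnePoint.infty = 0 := rfl
  rw [hinf, Metric.tendsto_nhds]
  intro ε hε
  rw [Filter.eventually_cofinite]
  have hsub : {a : ℕ+ | ¬ dist (rinv ((a : ℕ+) : NInf)) 0 < ε}
      ⊆ (fun a : ℕ+ => (a : ℕ)) ⁻¹' (Set.Iic ⌈1/ε⌉₊) := by
    intro a ha
    simp only [Set.mem_setOf_eq, not_lt] at ha
    have hra : rinv ((a : ℕ+) : NInf) = 1 / (a : ℝ) := rfl
    rw [hra, Real.dist_eq, sub_zero] at ha
    have hpos : (0:ℝ) < (a:ℝ) := by exact_mod_cast a.pos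
    have h1 : |1 / (a:ℝ)| = 1/(a:ℝ) := abs_of_pos (by positivity)
    rw [h1] at ha
    have h2 : (a : ℝ) ≤ 1/ε := by
      rw [le_div_iff₀ hε]
      rw [le_div_iff₀ hpos] at ha
      linarith
    simp only [Set.mem_preimage, Set.mem_Iic]
    exact_mod_cast le_trans h2 (Nat.le_ceil _)
  exact Set.Finite.subset ((Set.finite_Iic _).preimage (Set.injOn_of_injective (fun x y h => by exact_mod_cast h))) hsub

lemma continuous_shift : Continuous shift :=
  continuous_pi (fun i => continuous_apply (i+1))

lemma continuous_cfVal : ∀ k, Continuous (fun σ : ℕ → NInf => cfVal k σ) := by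
  intro k
  induction k with
  | zero => exact continuous_const
  | succ k ih =>
    rw [continuous_iff_continuousAt]
    intro σ
    rcases h0 : toOpt (σ 0) with _ | a
    · have hσ0 : σ 0 = OnePoint.infty := (toOpt_none_iff (σ 0)).mp h0
      rw [ContinuousAt, cfVal_succ_infty _ _ hσ0]
      apply squeeze_zero (fun τ => cfVal_nonneg _ _) (fun τ => cfVal_le_rinv _ _)
      have hz : rinv (σ 0) = 0 := by unfold rinv; rw [h0]
      have hcont : Continuous (fun τ : ℕ → NInf => rinv (τ 0)) :=
        continuous_rinv.comp (continuous_apply 0)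
      have := hcont.continuousAt (x := σ)
      rwa [ContinuousAt, hz] at this
    · have hmem0 : σ 0 = OnePoint.some a := h0
      have hopen : IsOpen ((fun τ : ℕ → NInf => τ 0) ⁻¹' {OnePoint.some a}) := by
        apply IsOpen.preimage (continuous_apply 0)
        have : ({OnePoint.some a} : Set NInf) = (fun x : ℕ+ => (x : NInf)) '' {a} := by
          simp [Set.image_singleton]
        rw [this]
        exact OnePoint.isOpen_image_coe.mpr (isOpen_discrete _)
      have hmem : σ ∈ (fun τ : ℕ → NInf => τ 0) ⁻¹' {OnePoint.some a} := hmem0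
      have hc : Continuous (fun τ : ℕ → NInf => 1 / ((a:ℝ) + cfVal k (shift τ))) := by
        apply Continuous.div continuous_const
        · exact continuous_const.add (ih.comp continuous_shift)
        · intro τ
          have h1 : (1:ℝ) ≤ (a:ℝ) := by exact_mod_cast a.one_le
          have h2 := cfVal_nonneg k (shift τ)
          exact ne_of_gt (by linarith)
      have hev : (fun τ : ℕ → NInf => 1 / ((a:ℝ) + cfVal k (shift τ)))
          =ᶠ[nhds σ] (fun τ : ℕ → NInf => cfVal (k+1) τ) := by
        filter_upwards [hopen.mem_nhds hmem] with τ hτ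
        exact (cfVal_succ_some k τ a hτ).symm
      exact hc.continuousAt.congr hev

lemma continuous_phiTilde : Continuous phiTilde := by
  have htu : TendstoUniformly (fun k (σ : ℕ → NInf) => cfVal k σ) phiTilde atTop := by
    rw [Metric.tendstoUniformly_iff]
    intro ε hε
    have hev : ∀ᶠ n in atTop, 1 / (Nat.fib (n+1) : ℝ)^2 < ε :=
      tendsto_bound.eventually_lt_const hε
    filter_upwards [hev] with k hk σ
    rw [Real.dist_eq]
    exact lt_of_le_of_lt (phiTilde_sub_cfVal σ k) hk
  exact htu.continuous (Filter.Eventually.of_forall continuous_cfVal).frequently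

end S8
end Aux

/-- `|φ̃(σ) - φ̃(τ)| ≤ ρ^ℕ(σ, τ)` for all `σ, τ`; in particular `φ̃` is
continuous. -/
theorem stmt8 :
    (∀ σ τ : ℕ → NInf, |phiTilde σ - phiTilde τ| ≤ rhoN σ τ) ∧ Continuous phiTilde := by
  exact ⟨S8.abs_phi_le, S8.continuous_phiTilde⟩
end

section
/- The set R_g = {(σ, τ) ∈ ℕ∞^ℕ × ℕ∞^ℕ : g(σ) = g(τ)} is closed in the product space ℕ∞^ℕ × ℕ∞^ℕ (where ℕ∞^ℕ carries the product topology). -/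
open scoped Classical

section Stmt10Aux
open Filter Topology

lemma gmap_apply' (σ : ℕ → NInf) (k : ℕ) :
    gmap σ k = if ∀ j ≤ k, σ j ≠ OnePoint.infty then σ k else OnePoint.infty := by
  unfold gmap
  split_ifs with h h1 h1
  · have : k < Nat.find h := (Nat.lt_find_iff h k).mpr fun m hm => h1 m hm
    simp [trunc, this]
  · have : ¬ k < Nat.find h := by
      rw [Nat.lt_find_iff]
      push_neg at h1 ⊢
      exact h1
    simp [trunc, this]
  · rfl
  · push_neg at h1
    obtain ⟨j, _, hj⟩ := h1
    exact absurd ⟨j, hj⟩ h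

lemma gmap_eq_of' (σ : ℕ → NInf) (k : ℕ) (h : ∀ j ≤ k, σ j ≠ OnePoint.infty) :
    gmap σ k = σ k := by
  rw [gmap_apply', if_pos h]

lemma gmap_eq_infty' (σ : ℕ → NInf) (k : ℕ) (h : ¬ ∀ j ≤ k, σ j ≠ OnePoint.infty) :
    gmap σ k = OnePoint.infty := by
  rw [gmap_apply', if_neg h]

lemma isOpen_singleton_ne_infty' (a : NInf) (ha : a ≠ OnePoint.infty) :
    IsOpen ({a} : Set NInf) := by
  induction a using OnePoint.rec with
  | infty => exact absurd rfl ha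
  | coe b =>
    exact (Set.image_singleton ▸
      OnePoint.isOpenEmbedding_coe.isOpenMap {b} (isOpen_discrete _) : _)

lemma ev_fst' (σ τ : ℕ → NInf) (j : ℕ) (U : Set NInf) (hU : IsOpen U) (hm : σ j ∈ U) :
    ∀ᶠ p : (ℕ → NInf) × (ℕ → NInf) in 𝓝 (σ, τ), p.1 j ∈ U :=
  (((continuous_apply j).comp continuous_fst).continuousAt :
    ContinuousAt (fun p : (ℕ → NInf) × (ℕ → NInf) => p.1 j) (σ, τ)) (hU.mem_nhds hm)

lemma ev_snd' (σ τ : ℕ → NInf) (j : ℕ) (U : Set NInf) (hU : IsOpen U) (hm : τ j ∈ U) :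
    ∀ᶠ p : (ℕ → NInf) × (ℕ → NInf) in 𝓝 (σ, τ), p.2 j ∈ U :=
  (((continuous_apply j).comp continuous_snd).continuousAt :
    ContinuousAt (fun p : (ℕ → NInf) × (ℕ → NInf) => p.2 j) (σ, τ)) (hU.mem_nhds hm)

lemma key' (σ τ : ℕ → NInf) (k : ℕ) (hs : ¬ ∀ j ≤ k, σ j ≠ OnePoint.infty)
    (ht : ∀ j ≤ k, τ j ≠ OnePoint.infty) :
    ∀ᶠ p : (ℕ → NInf) × (ℕ → NInf) in 𝓝 (σ, τ), gmap p.1 ≠ gmap p.2 := by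
  push_neg at hs
  obtain ⟨j0, hj0k, hj0⟩ := hs
  have hex : ∃ j, σ j = OnePoint.infty := ⟨j0, hj0⟩
  set m := Nat.find hex with hmdef
  have hmk : m ≤ k := le_trans (Nat.find_min' hex hj0) hj0k
  have hminf : σ m = OnePoint.infty := Nat.find_spec hex
  have hmin : ∀ i < m, σ i ≠ OnePoint.infty := fun i hi => Nat.find_min hex hi
  have hτm : τ m ≠ OnePoint.infty := ht m hmk
  have evA : ∀ᶠ p : (ℕ → NInf) × (ℕ → NInf) in 𝓝 (σ, τ),
      ∀ j ∈ Finset.range (m + 1), p.2 j = τ j := by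
    rw [Filter.eventually_all_finset]
    intro j hj
    have hjm : j ≤ m := Nat.lt_succ_iff.mp (Finset.mem_range.mp hj)
    exact ev_snd' σ τ j {τ j} (isOpen_singleton_ne_infty' _ (ht j (le_trans hjm hmk))) rfl
  have evB : ∀ᶠ p : (ℕ → NInf) × (ℕ → NInf) in 𝓝 (σ, τ),
      ∀ i ∈ Finset.range m, p.1 i = σ i := by
    rw [Filter.eventually_all_finset]
    intro i hi
    exact ev_fst' σ τ i {σ i} (isOpen_singleton_ne_infty' _ (hmin i (Finset.mem_range.mp hi))) rfl
  have evC : ∀ᶠ p : (ℕ → NInf) × (ℕ → NInf) in 𝓝 (σ, τ), p.1 m ≠ τ m := by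
    have := ev_fst' σ τ m ({τ m}ᶜ) (isClosed_singleton.isOpen_compl)
      (by simp [hminf, Ne.symm hτm])
    exact this
  filter_upwards [evA, evB, evC] with p hA hB hC hcontra
  have hg2 : gmap p.2 m = τ m := by
    rw [gmap_eq_of']
    · exact hA m (Finset.mem_range.mpr (Nat.lt_succ_self m))
    · intro j hj
      rw [hA j (Finset.mem_range.mpr (Nat.lt_succ_of_le hj))]
      exact ht j (le_trans hj hmk)
  have hg1 : gmap p.1 m ≠ τ m := by
    by_cases hq : ∀ j ≤ m, p.1 j ≠ OnePoint.infty
    · rw [gmap_eq_of' _ _ hq]; exact hC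
    · rw [gmap_eq_infty' _ _ hq]; exact Ne.symm hτm
  exact hg1 (by rw [hcontra, hg2])

end Stmt10Aux

/-- The graph `R_g = {(σ, τ) : g(σ) = g(τ)}` is closed in
`ℕ∞^ℕ × ℕ∞^ℕ` with the product topology. -/
theorem stmt10 :
    IsClosed {p : (ℕ → NInf) × (ℕ → NInf) | gmap p.1 = gmap p.2} := by
  rw [← isOpen_compl_iff, isOpen_iff_mem_nhds]
  rintro ⟨σ, τ⟩ hst
  simp only [Set.mem_compl_iff, Set.mem_setOf_eq] at hst
  have hk : ∃ k, gmap σ k ≠ gmap τ k := by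
    by_contra h
    push_neg at h
    exact hst (funext h)
  obtain ⟨k, hk⟩ := hk
  suffices h : ∀ᶠ p : (ℕ → NInf) × (ℕ → NInf) in nhds (σ, τ), gmap p.1 ≠ gmap p.2 by
    exact h
  by_cases hs : ∀ j ≤ k, σ j ≠ OnePoint.infty <;>
    by_cases ht : ∀ j ≤ k, τ j ≠ OnePoint.infty
  · -- both finite up to k
    have hne : σ k ≠ τ k := by
      rwa [gmap_eq_of' σ k hs, gmap_eq_of' τ k ht] at hk
    have evA : ∀ᶠ p : (ℕ → NInf) × (ℕ → NInf) in nhds (σ, τ),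
        ∀ j ∈ Finset.range (k + 1), p.1 j = σ j ∧ p.2 j = τ j := by
      rw [Filter.eventually_all_finset]
      intro j hj
      have hjk : j ≤ k := Nat.lt_succ_iff.mp (Finset.mem_range.mp hj)
      exact (ev_fst' σ τ j {σ j} (isOpen_singleton_ne_infty' _ (hs j hjk)) rfl).and
        (ev_snd' σ τ j {τ j} (isOpen_singleton_ne_infty' _ (ht j hjk)) rfl)
    filter_upwards [evA] with p hA hcontra
    have h1 : gmap p.1 k = σ k := by
      rw [gmap_eq_of']
      · exact (hA k (Finset.mem_range.mpr (Nat.lt_succ_self k))).1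
      · intro j hj
        rw [(hA j (Finset.mem_range.mpr (Nat.lt_succ_of_le hj))).1]
        exact hs j hj
    have h2 : gmap p.2 k = τ k := by
      rw [gmap_eq_of']
      · exact (hA k (Finset.mem_range.mpr (Nat.lt_succ_self k))).2
      · intro j hj
        rw [(hA j (Finset.mem_range.mpr (Nat.lt_succ_of_le hj))).2]
        exact ht j hj
    exact hne (by rw [← h1, ← h2, hcontra])
  · -- σ finite, τ has ∞
    have := (continuous_swap.continuousAt :
        ContinuousAt (Prod.swap : _ → (ℕ → NInf) × (ℕ → NInf)) (σ, τ)).eventually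
      (key' τ σ k ht hs)
    exact this.mono fun p hp => Ne.symm hp
  · exact key' σ τ k hs ht
  · exact absurd (by rw [gmap_eq_infty' σ k hs, gmap_eq_infty' τ k ht]) hk
end

section
/- The topological space (Σ, T_Σ) is compact, Hausdorff, and metrizable. -/
open scoped Classical

namespace Stmt11Aux

/-- `r m = (1/3)^m`, with `r ∞ = 0`. -/
noncomputable def r (m : NInf) : ℝ :=
  match toOpt m with
  | none => 0
  | some a => (1 / 3 : ℝ) ^ (a : ℕ)

lemma r_infty : r OnePoint.infty = 0 := rfl

lemma r_coe (a : ℕ+) : r ((a : ℕ+) : NInf) = (1 / 3 : ℝ) ^ (a : ℕ) := rfl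

lemma r_injective : Function.Injective r := by
  have hanti : StrictAnti fun n : ℕ => (1 / 3 : ℝ) ^ n :=
    pow_right_strictAnti₀ (by norm_num) (by norm_num)
  intro m n hmn
  match m, n with
  | OnePoint.infty, OnePoint.infty => rfl
  | OnePoint.infty, (b : ℕ+) =>
    exact absurd hmn.symm (by simpa [r_infty, r_coe] using (pow_pos (by norm_num : (0:ℝ) < 1/3) (b : ℕ)).ne')
  | (a : ℕ+), OnePoint.infty =>
    exact absurd hmn (by simpa [r_infty, r_coe] using (pow_pos (by norm_num : (0:ℝ) < 1/3) (a : ℕ)).ne')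
  | (a : ℕ+), (b : ℕ+) =>
    have : (a : ℕ) = (b : ℕ) := hanti.injective (by simpa [r_coe] using hmn)
    exact congrArg _ (PNat.coe_injective this)

lemma r_eq_zero_iff {m : NInf} : r m = 0 ↔ m = OnePoint.infty :=
  ⟨fun h => r_injective (by rw [h, r_infty]), fun h => h ▸ r_infty⟩

lemma r_continuous : Continuous r := by
  rw [OnePoint.continuous_iff_from_discrete]
  have h1 : Filter.Tendsto (fun n : ℕ => (1 / 3 : ℝ) ^ n) Filter.atTop (nhds 0) :=
    tendsto_pow_atTop_nhds_zero_of_lt_one (by norm_num) (by norm_num)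
  have h2 : Filter.Tendsto ((↑) : ℕ+ → ℕ) Filter.cofinite Filter.atTop :=
    Nat.cofinite_eq_atTop ▸ PNat.coe_injective.tendsto_cofinite
  exact (h1.comp h2 : _)

/-- If `σ ∈ Σ` and `σ i = ∞`, then all later terms are `∞`. -/
lemma sigma_infty_mono {σ : ℕ → NInf} (hσ : σ ∈ SigmaSet) {i k : ℕ}
    (hik : i ≤ k) (hi : σ i = OnePoint.infty) : σ k = OnePoint.infty := by
  rcases hσ with h | h
  · exact absurd hi (h i)
  · rcases Set.mem_iUnion.mp h with ⟨n, h1, h2⟩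
    refine h2 k (le_trans ?_ hik)
    by_contra hlt
    exact h1 i (Nat.lt_of_not_le hlt) hi

/-- The embedding of `Σ` into `ℕ → ℝ`. -/
noncomputable def hmap (s : Sig) : ℕ → ℝ :=
  fun k => ∏ i ∈ Finset.range (k + 1), r (Sig.val s i)

lemma prod_r_gmap (σ : ℕ → NInf) (k : ℕ) :
    ∏ i ∈ Finset.range (k + 1), r (gmap σ i) = ∏ i ∈ Finset.range (k + 1), r (σ i) := by
  unfold gmap
  split_ifs with h
  · set n := Nat.find h with hn
    by_cases hkn : k + 1 ≤ n
    · refine Finset.prod_congr rfl fun i hi => ?_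
      have : i < n := lt_of_lt_of_le (Finset.mem_range.mp hi) hkn
      simp [trunc, this]
    · have hmem : n ∈ Finset.range (k + 1) := Finset.mem_range.mpr (Nat.lt_of_not_le hkn)
      rw [Finset.prod_eq_zero hmem, Finset.prod_eq_zero hmem]
      · rw [r_eq_zero_iff]; exact Nat.find_spec h
      · rw [r_eq_zero_iff]; simp [trunc]
  · rfl

lemma hmap_continuous : Continuous hmap := by
  have : Continuous (hmap ∘ gS) := by
    refine continuous_pi fun k => ?_
    have heq : (fun σ : ℕ → NInf => (hmap ∘ gS) σ k)
        = fun σ => ∏ i ∈ Finset.range (k + 1), r (σ i) := by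
      funext σ
      exact prod_r_gmap σ k
    rw [show (fun σ : ℕ → NInf => ((hmap ∘ gS) σ) k)
        = fun σ => ∏ i ∈ Finset.range (k + 1), r (σ i) from heq]
    exact continuous_finset_prod _ fun i _ => r_continuous.comp (continuous_apply i)
  exact continuous_coinduced_dom.mpr this

lemma hmap_injective : Function.Injective hmap := by
  intro s t hst
  have key : ∀ k, Sig.val s k = Sig.val t k := by
    intro k
    induction k using Nat.strong_induction_on with
    | _ k ih =>
      have hk : ∏ i ∈ Finset.range (k + 1), r (Sig.val s i)
          = ∏ i ∈ Finset.range (k + 1), r (Sig.val t i) := congrFun hst k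
      rw [Finset.prod_range_succ, Finset.prod_range_succ] at hk
      have hpre : ∏ i ∈ Finset.range k, r (Sig.val s i)
          = ∏ i ∈ Finset.range k, r (Sig.val t i) :=
        Finset.prod_congr rfl fun i hi => by rw [ih i (Finset.mem_range.mp hi)]
      by_cases hz : ∏ i ∈ Finset.range k, r (Sig.val s i) = 0
      · rcases Finset.prod_eq_zero_iff.mp hz with ⟨i, hi, hri⟩
        have hik : i ≤ k := le_of_lt (Finset.mem_range.mp hi)
        have hsk : Sig.val s k = OnePoint.infty :=
          sigma_infty_mono s.2 hik (r_eq_zero_iff.mp hri)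
        have hti : Sig.val t i = OnePoint.infty := by
          rw [show Sig.val t i = Sig.val s i from (ih i (Finset.mem_range.mp hi)).symm]
          exact r_eq_zero_iff.mp hri
        have htk : Sig.val t k = OnePoint.infty := sigma_infty_mono t.2 hik hti
        rw [hsk, htk]
      · rw [hpre] at hk
        rw [hpre] at hz
        exact r_injective (mul_left_cancel₀ hz hk)
  exact Subtype.ext (funext key)

lemma gmap_eq_self {σ : ℕ → NInf} (h : σ ∈ SigmaSet) : gmap σ = σ := by
  unfold gmap
  split_ifs with hex
  · rcases h with h | h
    · exact absurd hex (by push_neg; exact h)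
    · rcases Set.mem_iUnion.mp h with ⟨n, h1, h2⟩
      have hfn : Nat.find hex = n := by
        have hle : Nat.find hex ≤ n := Nat.find_le (h2 n le_rfl)
        have hge : n ≤ Nat.find hex := by
          by_contra hlt
          exact h1 (Nat.find hex) (Nat.lt_of_not_le hlt) (Nat.find_spec hex)
        exact le_antisymm hle hge
      funext k
      rw [hfn]
      by_cases hkn : k < n
      · simp [trunc, hkn]
      · simp [trunc, hkn, (h2 k (Nat.le_of_not_lt hkn)).symm]
  · rfl

lemma gS_surjective : Function.Surjective gS := by
  intro s
  exact ⟨Sig.val s, Subtype.ext (gmap_eq_self s.2)⟩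

lemma compactSpace_sig : CompactSpace Sig := by
  have hc : Continuous gS := continuous_coinduced_rng
  rw [← isCompact_univ_iff, ← Set.range_eq_univ.mpr gS_surjective]
  exact isCompact_range hc

end Stmt11Aux

/-- `(Σ, T_Σ)` is compact, Hausdorff and metrizable. -/
theorem stmt11 : CompactSpace Sig ∧ T2Space Sig ∧ TopologicalSpace.MetrizableSpace Sig := by
  have hcomp : CompactSpace Sig := Stmt11Aux.compactSpace_sig
  have ht2 : T2Space Sig :=
    T2Space.of_injective_continuous Stmt11Aux.hmap_injective Stmt11Aux.hmap_continuous
  refine ⟨hcomp, ht2, ?_⟩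
  have hemb : Topology.IsClosedEmbedding Stmt11Aux.hmap :=
    Stmt11Aux.hmap_continuous.isClosedEmbedding Stmt11Aux.hmap_injective
  exact hemb.toIsEmbedding.metrizableSpace
end

section
/- The map g : ℕ∞^ℕ → (Σ, T_Σ) is a closed mapping: the image under g of every closed subset of the product space ℕ∞^ℕ is closed in (Σ, T_Σ). -/
open scoped Classical

section Aux

open Filter Topology

instance : (Filter.cofinite : Filter ℕ+).IsCountablyGenerated := by
  rw [← Function.Injective.comap_cofinite_eq (f := (PNat.val : ℕ+ → ℕ)) PNat.coe_injective,
    Nat.cofinite_eq_atTop]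
  infer_instance

instance : FirstCountableTopology NInf := by
  constructor
  intro a
  cases a with
  | none =>
    rw [show (none : NInf) = OnePoint.infty from rfl, OnePoint.nhds_infty_eq,
      Filter.coclosedCompact_eq_cocompact, Filter.cocompact_eq_cofinite]
    infer_instance
  | some x =>
    rw [show (some x : NInf) = ((x : ℕ+) : NInf) from rfl, OnePoint.nhds_coe_eq]
    infer_instance

lemma gmap_apply_lt (σ : ℕ → NInf) {k : ℕ} (h : ∀ j, j ≤ k → σ j ≠ OnePoint.infty) :
    gmap σ k = σ k := by
  unfold gmap
  split_ifs with he
  · have hk : k < Nat.find he := by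
      rw [Nat.lt_find_iff]
      intro m hm; exact h m hm
    simp [trunc, hk]
  · rfl

lemma gmap_eq_trunc {σ : ℕ → NInf} {n : ℕ} (h1 : ∀ j, j < n → σ j ≠ OnePoint.infty)
    (h2 : σ n = OnePoint.infty) : gmap σ = trunc n σ := by
  have he : ∃ k, σ k = OnePoint.infty := ⟨n, h2⟩
  have hfind : Nat.find he = n := by
    rw [Nat.find_eq_iff]; exact ⟨h2, fun m hm => h1 m hm⟩
  unfold gmap; rw [dif_pos he, hfind]

lemma gmap_ne_infty {σ : ℕ → NInf} {k : ℕ} (h : gmap σ k ≠ OnePoint.infty) :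
    gmap σ k = σ k := by
  unfold gmap at h ⊢
  split_ifs at h ⊢ with he
  · unfold trunc at h ⊢
    split_ifs at h ⊢ with hk
    · rfl
    · exact absurd rfl h
  · rfl

lemma isOpen_singleton_coe (a : ℕ+) : IsOpen ({(a : NInf)} : Set NInf) := by
  have h := (OnePoint.isOpenEmbedding_coe (X := ℕ+)).isOpenMap {a} (isOpen_discrete _)
  simpa using h

lemma exists_coe_of_ne_infty {m : NInf} (h : m ≠ OnePoint.infty) : ∃ a : ℕ+, m = (a : NInf) := by
  cases m with
  | none => exact absurd rfl h
  | some a => exact ⟨a, rfl⟩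

lemma gS_eq_of_gmap_eq {σ τ : ℕ → NInf} (h : gmap σ = gmap τ) : gS σ = gS τ :=
  Subtype.ext h

lemma gmap_eq_of_gS_eq {σ τ : ℕ → NInf} (h : gS σ = gS τ) : gmap σ = gmap τ :=
  congrArg Subtype.val h

/-- Eventual equality along a tendsto to a finite point. -/
lemma eventually_eq_coe {u : ℕ → NInf} {a : ℕ+}
    (h : Filter.Tendsto u Filter.atTop (nhds (a : NInf))) :
    ∀ᶠ i in Filter.atTop, u i = (a : NInf) := by
  filter_upwards [h ((isOpen_singleton_coe a).mem_nhds rfl)] with i hi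
  exact hi

end Aux

/-- `g : ℕ∞^ℕ → (Σ, T_Σ)` is a closed mapping. -/
theorem stmt12 : IsClosedMap gS := by
  classical
  intro F hF
  apply isClosed_coinduced.mpr
  apply IsSeqClosed.isClosed
  intro u σ hu hconv
  -- choose preimages in F
  have hu' : ∀ i, ∃ t, t ∈ F ∧ gS t = gS (u i) := fun i => hu i
  choose τ hτF hτg using hu'
  -- extract convergent subsequence of τ
  obtain ⟨tl, -, φ, hφ, hφconv⟩ :=
    (isCompact_univ (X := ℕ → NInf)).isSeqCompact (fun i => Set.mem_univ (τ i))
  have htlF : tl ∈ F :=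
    hF.mem_of_tendsto hφconv (Filter.Eventually.of_forall fun i => hτF (φ i))
  have hptu : ∀ k, Filter.Tendsto (fun i => u i k) Filter.atTop (nhds (σ k)) :=
    fun k => (tendsto_pi_nhds.1 hconv) k
  have hptτ : ∀ k, Filter.Tendsto (fun i => τ (φ i) k) Filter.atTop (nhds (tl k)) :=
    fun k => (tendsto_pi_nhds.1 hφconv) k
  -- eventual agreement on finite coordinates of σ
  have hEv : ∀ k : ℕ, σ k ≠ OnePoint.infty → ∀ᶠ i in Filter.atTop, u i k = σ k := by
    intro k hk
    obtain ⟨a, ha⟩ := exists_coe_of_ne_infty hk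
    have := eventually_eq_coe (ha ▸ hptu k)
    filter_upwards [this] with i hi
    rw [hi, ha]
  by_cases hσ : ∃ n, σ n = OnePoint.infty
  · -- σ has an ∞; n = first such index
    set n := Nat.find hσ with hn_def
    have hn : σ n = OnePoint.infty := Nat.find_spec hσ
    have hlt : ∀ j, j < n → σ j ≠ OnePoint.infty := fun j hj => Nat.find_min hσ hj
    have hgσ : gmap σ = trunc n σ := gmap_eq_trunc hlt hn
    have E1 : ∀ᶠ i in Filter.atTop, ∀ j, j < n → u i j = σ j := by
      have h := (Filter.eventually_all_finite (Set.finite_Iio n)).2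
        (fun j hj => hEv j (hlt j hj))
      filter_upwards [h] with i hi j hj
      exact hi j hj
    by_cases hA : ∃ᶠ i in Filter.atTop, u i n = OnePoint.infty
    · -- infinitely many u i already have their first ∞ at n
      obtain ⟨i, hiInf, hiE⟩ := (hA.and_eventually E1).exists
      have h1 : ∀ j, j < n → u i j ≠ OnePoint.infty := fun j hj =>
        (hiE j hj) ▸ hlt j hj
      have hgu : gmap (u i) = trunc n (u i) := gmap_eq_trunc h1 hiInf
      have htr : trunc n (u i) = trunc n σ := by
        funext k
        unfold trunc
        split_ifs with hk
        · exact hiE k hk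
        · rfl
      refine ⟨τ i, hτF i, ?_⟩
      rw [hτg i]
      exact gS_eq_of_gmap_eq (by rw [hgu, htr, hgσ])
    · -- eventually u i n is finite
      have E2 : ∀ᶠ i in Filter.atTop, u i n ≠ OnePoint.infty :=
        (Filter.not_frequently.mp hA).mono fun i hi => by simpa using hi
      have E12 : ∀ᶠ i in Filter.atTop,
          (∀ j, j < n → u i j = σ j) ∧ u i n ≠ OnePoint.infty := E1.and E2
      have key : ∀ᶠ i in Filter.atTop, ∀ j, j ≤ n → τ i j = u i j := by
        filter_upwards [E12] with i ⟨h1, h2⟩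
        intro j hj
        have hfin : ∀ j', j' ≤ j → u i j' ≠ OnePoint.infty := by
          intro j' hj'
          rcases lt_or_eq_of_le (le_trans hj' hj) with h | h
          · exact (h1 j' h) ▸ hlt j' h
          · exact h ▸ h2
        have hgu : gmap (u i) j = u i j := gmap_apply_lt (u i) hfin
        have hgτ : gmap (τ i) j = u i j := by rw [gmap_eq_of_gS_eq (hτg i), hgu]
        have : gmap (τ i) j ≠ OnePoint.infty := hgτ ▸ hfin j le_rfl
        rw [← gmap_ne_infty this, hgτ]
      -- tl agrees with σ below n
      have htllt : ∀ j, j < n → tl j = σ j := by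
        intro j hj
        have hev : ∀ᶠ i in Filter.atTop, τ (φ i) j = σ j := by
          filter_upwards [hφ.tendsto_atTop.eventually (key.and E1)] with i ⟨h1, h2⟩
          rw [h1 j (le_of_lt hj), h2 j hj]
        exact tendsto_nhds_unique (hptτ j)
          ((tendsto_const_nhds (x := σ j)).congr' (Filter.EventuallyEq.symm hev))
      -- tl n = ∞
      have htln : tl n = OnePoint.infty := by
        have hev : ∀ᶠ i in Filter.atTop, τ (φ i) n = u (φ i) n := by
          filter_upwards [hφ.tendsto_atTop.eventually key] with i h1
          exact h1 n le_rfl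
        have h2 : Filter.Tendsto (fun i => u (φ i) n) Filter.atTop
            (nhds (OnePoint.infty : NInf)) := hn ▸ (hptu n).comp hφ.tendsto_atTop
        exact tendsto_nhds_unique (hptτ n) (h2.congr' (Filter.EventuallyEq.symm hev))
      refine ⟨tl, htlF, ?_⟩
      apply gS_eq_of_gmap_eq
      have hgtl : gmap tl = trunc n tl :=
        gmap_eq_trunc (fun j hj => (htllt j hj) ▸ hlt j hj) htln
      rw [hgtl, hgσ]
      funext k
      unfold trunc
      split_ifs with hk
      · exact htllt k hk
      · rfl
  · -- σ has no ∞: show tl = σ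
    push_neg at hσ
    have htleq : tl = σ := by
      funext k
      have hev : ∀ᶠ i in Filter.atTop, τ i k = σ k := by
        have E : ∀ᶠ i in Filter.atTop, ∀ j, j ≤ k → u i j = σ j := by
          have h := (Filter.eventually_all_finite (Set.finite_Iic k)).2
            (fun j (_ : j ∈ Set.Iic k) => hEv j (hσ j))
          filter_upwards [h] with i hi j hj
          exact hi j hj
        filter_upwards [E] with i hi
        have hfin : ∀ j, j ≤ k → u i j ≠ OnePoint.infty := fun j hj =>
          (hi j hj) ▸ hσ j
        have hgu : gmap (u i) k = u i k := gmap_apply_lt (u i) hfin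
        have hgτ : gmap (τ i) k = σ k := by
          rw [gmap_eq_of_gS_eq (hτg i), hgu, hi k le_rfl]
        have : gmap (τ i) k ≠ OnePoint.infty := hgτ ▸ hσ k
        rw [← gmap_ne_infty this, hgτ]
      have hev' : ∀ᶠ i in Filter.atTop, τ (φ i) k = σ k :=
        hφ.tendsto_atTop.eventually hev
      exact tendsto_nhds_unique (hptτ k)
        ((tendsto_const_nhds (x := σ k)).congr' (Filter.EventuallyEq.symm hev'))
    exact ⟨σ, htleq ▸ htlF, rfl⟩
end

section
/- Fix n ∈ ℕ and σ ∈ Σ_n, and let Υ_σ = {υ ∈ Σ : υ^{(n)} = σ} be the cylinder set associated with σ. Then Υ_σ is a compact subset of (Σ, T_Σ). -/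
open scoped Classical

theorem gmap_of_memSigma {υ : ℕ → NInf} (h : υ ∈ SigmaSet) : gmap υ = υ := by
  unfold gmap
  split_ifs with hex
  · rcases h with h | h
    · exact absurd (Nat.find_spec hex) (h _)
    · obtain ⟨m, hm⟩ := Set.mem_iUnion.mp h
      obtain ⟨hm1, hm2⟩ := hm
      have hfind : Nat.find hex = m := by
        apply le_antisymm
        · exact Nat.find_le (hm2 m le_rfl)
        · by_contra hlt
          push_neg at hlt
          exact hm1 _ hlt (Nat.find_spec hex)
      funext k
      simp only [trunc, hfind]
      split_ifs with hk
      · rfl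
      · exact (hm2 k (le_of_not_gt hk)).symm
  · rfl

/-- For `n ∈ ℕ` and `σ ∈ Σ_n`, the cylinder set
`Υ_σ = {υ ∈ Σ : υ^{(n)} = σ}` is compact in `(Σ, T_Σ)`. -/
theorem stmt13 (n : ℕ) (hn : 0 < n) (σ : ℕ → NInf) (hσ : σ ∈ SigmaIdx n) :
    IsCompact {υ : Sig | trunc n (Sig.val υ) = σ} := by
  obtain ⟨hσ1, hσ2⟩ := hσ
  have hK : IsCompact {τ : ℕ → NInf | ∀ k < n, τ k = σ k} := by
    apply IsClosed.isCompact
    have heq : {τ : ℕ → NInf | ∀ k < n, τ k = σ k}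
        = ⋂ k ∈ Finset.range n, (fun τ : ℕ → NInf => τ k) ⁻¹' {σ k} := by
      ext τ; simp [Set.mem_iInter]
    rw [heq]
    exact isClosed_biInter fun k _ => isClosed_singleton.preimage (continuous_apply k)
  have himg : {υ : Sig | trunc n (Sig.val υ) = σ}
      = gS '' {τ : ℕ → NInf | ∀ k < n, τ k = σ k} := by
    ext υ
    constructor
    · intro hυ
      refine ⟨υ.val, fun k hk => ?_, ?_⟩
      · have := congrFun hυ k
        simpa [trunc, hk] using this
      · show Sig.mk (gmap υ.val) _ = υ
        have := gmap_of_memSigma υ.property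
        exact Subtype.ext this
    · rintro ⟨τ, hτ, rfl⟩
      show trunc n (gmap τ) = σ
      have hgk : ∀ k < n, gmap τ k = σ k := by
        intro k hk
        unfold gmap
        split_ifs with hex
        · have hfind : n ≤ Nat.find hex := by
            by_contra hlt
            push_neg at hlt
            exact hσ1 _ hlt ((hτ _ hlt).symm.trans (Nat.find_spec hex))
          simp only [trunc, lt_of_lt_of_le hk hfind, if_pos]
          exact hτ k hk
        · exact hτ k hk
      funext k
      by_cases hk : k < n
      · simpa [trunc, hk] using hgk k hk
      · simp only [trunc, hk, if_neg]
        exact (hσ2 k (le_of_not_gt hk)).symm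
  rw [himg]
  exact hK.image continuous_coinduced_rng
end

section
/- Fix n ∈ ℕ and σ ∈ Σ_n, and let Υ_σ = {υ ∈ Σ : υ^{(n)} = σ} be the cylinder set associated with σ. Then the complement Σ \ Υ_σ is a compact subset of (Σ, T_Σ). -/
open scoped Classical

lemma gmap_apply_ne (τ : ℕ → NInf) (k : ℕ) (h : gmap τ k ≠ OnePoint.infty) :
    gmap τ k = τ k := by
  unfold gmap at *
  split_ifs at * with h'
  · simp only [trunc] at *
    split_ifs at * with hk
    · rfl
    · exact absurd rfl h
  · rfl

lemma gmap_of_mem {τ : ℕ → NInf} (h : τ ∈ SigmaSet) : gmap τ = τ := by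
  unfold gmap
  split_ifs with h'
  · rcases h with h | h
    · exact absurd (Nat.find_spec h') (h _)
    · obtain ⟨m, hm⟩ := Set.mem_iUnion.mp h
      have hfind : Nat.find h' = m := by
        refine le_antisymm (Nat.find_le (hm.2 m le_rfl)) ?_
        by_contra hlt
        exact hm.1 _ (Nat.not_le.mp hlt) (Nat.find_spec h')
      funext k
      simp only [trunc, hfind]
      split_ifs with hk
      · rfl
      · exact (hm.2 k (Nat.not_lt.mp hk)).symm
  · rfl

lemma singleton_open_of_ne_infty {m : NInf} (h : m ≠ OnePoint.infty) :
    IsOpen ({m} : Set NInf) := by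
  obtain ⟨a, rfl⟩ : ∃ a : ℕ+, m = (a : NInf) := by
    cases m with
    | none => exact absurd rfl h
    | some a => exact ⟨a, rfl⟩
  have : ({(a : NInf)} : Set NInf) = (↑) '' ({a} : Set ℕ+) := by simp
  rw [this]
  exact OnePoint.isOpen_image_coe.2 (isOpen_discrete _)

/-- For `n ∈ ℕ` and `σ ∈ Σ_n`, the complement `Σ \ Υ_σ` of the cylinder
set is compact in `(Σ, T_Σ)`. -/
theorem stmt14 (n : ℕ) (hn : 0 < n) (σ : ℕ → NInf) (hσ : σ ∈ SigmaIdx n) :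
    IsCompact {υ : Sig | trunc n (Sig.val υ) ≠ σ} := by
  set C : Set (ℕ → NInf) := {τ | trunc n τ ≠ σ} with hCdef
  have hC : IsClosed C := by
    rw [← isOpen_compl_iff]
    have hcompl : Cᶜ = ⋂ k ∈ Finset.range n, {τ : ℕ → NInf | τ k = σ k} := by
      ext τ
      simp only [hCdef, Set.mem_compl_iff, Set.mem_setOf_eq, not_not, Set.mem_iInter,
        Finset.mem_range]
      constructor
      · intro h k hk
        have := congrFun h k
        simpa [trunc, hk] using this
      · intro h
        funext k
        by_cases hk : k < n
        · simp [trunc, hk, h k hk]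
        · simp [trunc, hk, hσ.2 k (Nat.not_lt.mp hk)]
    rw [hcompl]
    refine isOpen_biInter_finset fun k hk => ?_
    have hfin : σ k ≠ OnePoint.infty := hσ.1 k (Finset.mem_range.mp hk)
    have : {τ : ℕ → NInf | τ k = σ k} = (fun τ : ℕ → NInf => τ k) ⁻¹' {σ k} := rfl
    rw [this]
    exact (singleton_open_of_ne_infty hfin).preimage (continuous_apply k)
  have hCcomp : IsCompact C := hC.isCompact
  have himg : gS '' C = {υ : Sig | trunc n (Sig.val υ) ≠ σ} := by
    ext υ
    constructor
    · rintro ⟨τ, hτ, rfl⟩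
      intro heq
      apply hτ
      funext k
      by_cases hk : k < n
      · have h1 : trunc n (Sig.val (gS τ)) k = σ k := congrFun heq k
        simp only [trunc, hk, if_pos] at h1
        have hfin : σ k ≠ OnePoint.infty := hσ.1 k hk
        have hg : gmap τ k = σ k := h1
        have : gmap τ k = τ k := gmap_apply_ne τ k (hg ▸ hfin)
        simp [trunc, hk, ← this, hg]
      · simp [trunc, hk, hσ.2 k (Nat.not_lt.mp hk)]
    · intro hυ
      refine ⟨Sig.val υ, hυ, ?_⟩
      have : gmap (Sig.val υ) = Sig.val υ := gmap_of_mem υ.2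
      unfold gS Sig.mk
      exact Subtype.ext this
  exact himg ▸ hCcomp.image continuous_coinduced_rng
end

section
/- The map f : [0,1] → (Σ, T_Σ) (well-defined since f(x) ∈ Σ for every x ∈ [0,1]) is continuous at every irrational point of [0,1] and at the two rational points 0 and 1, where [0,1] carries the Euclidean topology. -/
open scoped Classical

open Filter Topology Set OnePoint

section myhelpers

lemma my_tbar_zero : Tbar 0 = 0 := by simp [Tbar]

lemma my_tbar_iter_zero (k : ℕ) : Tbar^[k] (0:ℝ) = 0 :=
  Function.iterate_fixed my_tbar_zero k

lemma my_cfSeq_zero : cfSeq 0 = fun _ => OnePoint.infty := by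
  funext k; simp [cfSeq, my_tbar_iter_zero, dbar]

lemma my_cfSeq_succ (y : ℝ) (i : ℕ) : cfSeq y (i+1) = cfSeq (Tbar y) i := by
  simp [cfSeq, Function.iterate_succ_apply]

lemma my_cfSeq_one : cfSeq 1 = fun k => if k = 0 then (((1:ℕ+) : NInf)) else OnePoint.infty := by
  funext k
  cases k with
  | zero =>
      show dbar 1 = _
      norm_num [dbar]
      rfl
  | succ k =>
      rw [my_cfSeq_succ]
      have h1 : Tbar 1 = 0 := by norm_num [Tbar]
      rw [h1, my_cfSeq_zero]
      simp

lemma my_gmap_eq_self {σ : ℕ → NInf} (h : σ ∈ SigmaSet) : gmap σ = σ := by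
  unfold gmap
  split_ifs with hex
  · rcases h with h | h
    · exact absurd (Nat.find_spec hex) (h _)
    · obtain ⟨n, hn⟩ := Set.mem_iUnion.mp h
      obtain ⟨hn1, hn2⟩ := hn
      have hfind : Nat.find hex = n := by
        apply le_antisymm
        · exact Nat.find_le (hn2 n le_rfl)
        · by_contra hlt
          push_neg at hlt
          exact hn1 _ hlt (Nat.find_spec hex)
      funext k
      simp only [trunc, hfind]
      split_ifs with hk
      · rfl
      · exact (hn2 k (Nat.not_lt.mp hk)).symm
  · rfl

lemma my_fS_eq (y : ℝ) : fS y = gS (cfSeq y) :=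
  Subtype.ext (my_gmap_eq_self (cfSeq_mem y)).symm

/-- Key local analysis at an irrational point of `(0,1)`. -/
lemma my_key_irr {x : ℝ} (hx : x ∈ Set.Ioo (0:ℝ) 1) (hirr : Irrational x) :
    Irrational (Tbar x) ∧ Tbar x ∈ Set.Ioo (0:ℝ) 1 ∧ ContinuousAt Tbar x ∧
      (∀ᶠ y in 𝓝 x, dbar y = dbar x) := by
  obtain ⟨hx0, hx1⟩ := hx
  have hinv : Irrational (1/x) := by rw [one_div]; exact hirr.inv
  set n : ℕ := ⌊1/x⌋₊ with hn
  have hxinv : x * (1/x) = 1 := by field_simp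
  have h1x : 1 < 1/x := by nlinarith
  have hnlt : (n:ℝ) < 1/x :=
    lt_of_le_of_ne (Nat.floor_le (by positivity)) (Ne.symm (hinv.ne_nat n))
  have hn1 : 1 ≤ n := Nat.le_floor (by push_cast; linarith)
  have hn0 : (0:ℝ) < n := by exact_mod_cast hn1
  have hlt1 : 1/x < (n:ℝ) + 1 := Nat.lt_floor_add_one (1/x)
  -- the open interval around x
  have hxmem : x ∈ Set.Ioo (1/((n:ℝ)+1)) (1/(n:ℝ)) := by
    constructor
    · rw [div_lt_iff₀ (by positivity)]; nlinarith
    · rw [lt_div_iff₀ hn0]; nlinarith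
  have hS : ∀ᶠ y in 𝓝 x, y ∈ Set.Ioo (1/((n:ℝ)+1)) (1/(n:ℝ)) :=
    Ioo_mem_nhds hxmem.1 hxmem.2
  have hfacts : ∀ y ∈ Set.Ioo (1/((n:ℝ)+1)) (1/(n:ℝ)),
      0 < y ∧ (n:ℝ) < 1/y ∧ 1/y < (n:ℝ)+1 := by
    intro y ⟨hy1, hy2⟩
    have hy0 : 0 < y := lt_trans (by positivity) hy1
    have hyinv : y * (1/y) = 1 := by field_simp
    rw [div_lt_iff₀ (by positivity)] at hy1
    rw [lt_div_iff₀ hn0] at hy2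
    refine ⟨hy0, ?_, ?_⟩
    · rw [lt_div_iff₀ hy0]; nlinarith
    · rw [div_lt_iff₀ hy0]; nlinarith
  have hIfl : ∀ y ∈ Set.Ioo (1/((n:ℝ)+1)) (1/(n:ℝ)), ⌊1/y⌋ = (n:ℤ) := by
    intro y hy
    obtain ⟨hy0, hylo, hyhi⟩ := hfacts y hy
    rw [Int.floor_eq_iff]
    constructor <;> push_cast <;> linarith
  have hNfl : ∀ y ∈ Set.Ioo (1/((n:ℝ)+1)) (1/(n:ℝ)), ⌊1/y⌋₊ = n := by
    intro y hy
    obtain ⟨hy0, hylo, hyhi⟩ := hfacts y hy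
    rw [Nat.floor_eq_iff (by positivity)]
    constructor <;> push_cast <;> linarith
  have hTloc : ∀ y ∈ Set.Ioo (1/((n:ℝ)+1)) (1/(n:ℝ)), Tbar y = 1/y - (n:ℝ) := by
    intro y hy
    obtain ⟨hy0, _, _⟩ := hfacts y hy
    have : Int.fract (1/y) = 1/y - ((n:ℤ):ℝ) := by
      rw [Int.fract, hIfl y hy]
    simpa [Tbar, hy0.ne'] using this
  have hTx : Tbar x = 1/x - (n:ℝ) := hTloc x hxmem
  have hTirr : Irrational (Tbar x) := by
    rw [hTx]
    have := hinv.sub_intCast (n:ℤ)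
    simpa using this
  have hTmem : Tbar x ∈ Set.Ioo (0:ℝ) 1 := by
    rw [hTx]; constructor <;> [linarith; linarith]
  have hcont : ContinuousAt Tbar x := by
    have hg : ContinuousAt (fun y : ℝ => 1/y - (n:ℝ)) x :=
      ((continuousAt_const.div continuousAt_id hx0.ne').sub continuousAt_const)
    apply hg.congr
    filter_upwards [hS] with y hy
    exact (hTloc y hy).symm
  have hdb : ∀ᶠ y in 𝓝 x, dbar y = dbar x := by
    filter_upwards [hS] with y hy
    obtain ⟨hy0, _, _⟩ := hfacts y hy
    unfold dbar
    rw [if_neg hy0.ne', if_neg hx0.ne', hNfl y hy]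
  exact ⟨hTirr, hTmem, hcont, hdb⟩

/-- Local constancy of the first `N` digits at irrationals. -/
lemma my_digits_loc : ∀ (N : ℕ) (x : ℝ), x ∈ Set.Ioo (0:ℝ) 1 → Irrational x →
    ∀ᶠ y in 𝓝 x, ∀ i < N, cfSeq y i = cfSeq x i := by
  intro N
  induction N with
  | zero => intro x _ _; filter_upwards with y i hi; omega
  | succ N ih =>
      intro x hx hirr
      obtain ⟨h1, h2, h3, h4⟩ := my_key_irr hx hirr
      have htail := h3.eventually (ih (Tbar x) h2 h1)
      filter_upwards [h4, htail] with y hy hty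
      intro i hi
      cases i with
      | zero => simpa [cfSeq] using hy
      | succ i =>
          rw [my_cfSeq_succ, my_cfSeq_succ]
          exact hty i (by omega)

/-- Saturation at `0`: anything starting with `∞` maps into a nbhd of `fS 0`. -/
lemma my_sat_zero {U : Set Sig} (hU : fS 0 ∈ U) {τ : ℕ → NInf}
    (hτ : τ 0 = OnePoint.infty) : τ ∈ gS ⁻¹' U := by
  have hgs : gS τ = fS 0 := by
    apply Subtype.ext
    show gmap τ = cfSeq 0
    rw [my_cfSeq_zero]
    unfold gmap
    have hex : ∃ k, τ k = OnePoint.infty := ⟨0, hτ⟩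
    rw [dif_pos hex]
    have hf : Nat.find hex = 0 := (Nat.find_eq_zero hex).mpr hτ
    funext k; simp [trunc, hf]
  show gS τ ∈ U
  rw [hgs]; exact hU

/-- Saturation at `1`. -/
lemma my_sat_one {U : Set Sig} (hU : fS 1 ∈ U) {τ : ℕ → NInf}
    (hτ0 : τ 0 = (((1:ℕ+)) : NInf)) (hτ1 : τ 1 = OnePoint.infty) : τ ∈ gS ⁻¹' U := by
  have hgs : gS τ = fS 1 := by
    apply Subtype.ext
    show gmap τ = cfSeq 1
    rw [my_cfSeq_one]
    unfold gmap
    have hex : ∃ k, τ k = OnePoint.infty := ⟨1, hτ1⟩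
    rw [dif_pos hex]
    have hf : Nat.find hex = 1 := by
      have h1 : Nat.find hex ≤ 1 := Nat.find_le hτ1
      have h0 : Nat.find hex ≠ 0 := by
        intro h
        have := (Nat.find_eq_zero hex).mp h
        rw [hτ0] at this
        exact OnePoint.coe_ne_infty _ this
      omega
    funext k
    cases k with
    | zero => simp [trunc, hf, hτ0]
    | succ k => simp [trunc, hf]
  show gS τ ∈ U
  rw [hgs]; exact hU

/-- From an open nbhd `W` of `∞` in `NInf`, get a bound `M`. -/
lemma my_bound_of_nhds {W : Set NInf} (hW : IsOpen W) (hinf : OnePoint.infty ∈ W) :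
    ∃ M : ℕ+, ∀ a : ℕ+, M < a → ((a : NInf) ∈ W) := by
  obtain ⟨-, hcomp⟩ := (OnePoint.isOpen_iff_of_mem hinf).mp hW
  have hfin : ((OnePoint.some ⁻¹' W)ᶜ : Set ℕ+).Finite := hcomp.finite_of_discrete
  obtain ⟨M, hM⟩ := hfin.bddAbove
  refine ⟨M, fun a ha => ?_⟩
  by_contra hmem
  exact absurd (hM (show a ∈ (OnePoint.some ⁻¹' W)ᶜ from hmem)) (not_le.mpr ha)

lemma my_dbar_large {W : Set NInf} {M : ℕ+}
    (hMW : ∀ a : ℕ+, M < a → ((a : NInf) ∈ W)) {y : ℝ} (hy0 : 0 < y)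
    (hy : (M:ℝ) + 1 ≤ 1/y) : dbar y ∈ W := by
  have hfl : (M:ℕ) + 1 ≤ ⌊1/y⌋₊ := Nat.le_floor (by push_cast; linarith)
  have hne : dbar y = ((⌊1/y⌋₊.toPNat' : ℕ+) : NInf) := by simp [dbar, hy0.ne']
  rw [hne]
  apply hMW
  have hco : ((⌊1/y⌋₊.toPNat' : ℕ+) : ℕ) = ⌊1/y⌋₊ := by
    rw [Nat.toPNat'_coe, if_pos]; omega
  rw [← PNat.coe_lt_coe, hco]
  omega

end myhelpers

/-- `f : [0,1] → (Σ, T_Σ)` is continuous at every irrational point of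
`[0,1]` and at the two rational points `0` and `1`. -/
theorem stmt16 (x : ℝ) (hx : x ∈ Set.Icc (0 : ℝ) 1)
    (hcase : Irrational x ∨ x = 0 ∨ x = 1) :
    ContinuousWithinAt fS (Set.Icc (0 : ℝ) 1) x := by
  have hfS : fS = gS ∘ cfSeq := funext my_fS_eq
  rcases hcase with hirr | rfl | rfl
  · -- irrational case
    have hx01 : x ∈ Set.Ioo (0:ℝ) 1 :=
      ⟨lt_of_le_of_ne hx.1 (Ne.symm hirr.ne_zero), lt_of_le_of_ne hx.2 hirr.ne_one⟩
    have ht : Filter.Tendsto cfSeq (𝓝 x) (𝓝 (cfSeq x)) := by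
      rw [tendsto_pi_nhds]
      intro k
      have hev := my_digits_loc (k+1) x hx01 hirr
      apply Filter.Tendsto.congr' _ tendsto_const_nhds
      filter_upwards [hev] with y hy using (hy k (Nat.lt_succ_self k)).symm
    have hca : ContinuousAt fS x := by
      rw [hfS]
      exact (continuous_coinduced_rng.continuousAt).comp ht
    exact hca.continuousWithinAt
  · -- x = 0
    show Filter.Tendsto fS (𝓝[Set.Icc (0:ℝ) 1] 0) (𝓝 (fS 0))
    rw [tendsto_nhds]
    intro U hUopen hU0
    have hVopen : IsOpen (gS ⁻¹' U) := hUopen.preimage continuous_coinduced_rng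
    set K := (gS ⁻¹' U)ᶜ with hK
    have hKc : IsCompact K := hVopen.isClosed_compl.isCompact
    set C := (fun τ : ℕ → NInf => τ 0) '' K with hC
    have hCc : IsCompact C := hKc.image (continuous_apply 0)
    have hinfC : OnePoint.infty ∉ C := by
      rintro ⟨τ, hτK, hτ0⟩
      exact hτK (my_sat_zero hU0 hτ0)
    obtain ⟨M, hM⟩ := my_bound_of_nhds hCc.isClosed.isOpen_compl hinfC
    have hnb : ∀ᶠ y in 𝓝[Set.Icc (0:ℝ) 1] (0:ℝ), y < 1/((M:ℝ)+1) :=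
      nhdsWithin_le_nhds (Iio_mem_nhds (by positivity))
    filter_upwards [hnb, self_mem_nhdsWithin] with y hylt hyI
    show fS y ∈ U
    by_cases hy0 : y = 0
    · rw [hy0]; exact hU0
    · have hy0' : 0 < y := lt_of_le_of_ne hyI.1 (Ne.symm hy0)
      have hinv : (M:ℝ) + 1 ≤ 1/y := by
        rw [lt_div_iff₀ (by positivity : (0:ℝ) < (M:ℝ)+1)] at hylt
        rw [le_div_iff₀ hy0']; nlinarith
      have hdb : dbar y ∈ Cᶜ := my_dbar_large hM hy0' hinv
      have hmem : cfSeq y ∈ gS ⁻¹' U := by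
        by_contra hc
        exact hdb ⟨cfSeq y, hc, rfl⟩
      rw [my_fS_eq]; exact hmem
  · -- x = 1
    show Filter.Tendsto fS (𝓝[Set.Icc (0:ℝ) 1] 1) (𝓝 (fS 1))
    rw [tendsto_nhds]
    intro U hUopen hU1
    have hVopen : IsOpen (gS ⁻¹' U) := hUopen.preimage continuous_coinduced_rng
    set K := (gS ⁻¹' U)ᶜ ∩ {τ : ℕ → NInf | τ 0 = (((1:ℕ+)) : NInf)} with hK
    have hKcl : IsClosed K :=
      hVopen.isClosed_compl.inter (isClosed_eq (continuous_apply 0) continuous_const)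
    have hKc : IsCompact K := hKcl.isCompact
    set C := (fun τ : ℕ → NInf => τ 1) '' K with hC
    have hCc : IsCompact C := hKc.image (continuous_apply 1)
    have hinfC : OnePoint.infty ∉ C := by
      rintro ⟨τ, ⟨hτK, hτ0⟩, hτ1⟩
      exact hτK (my_sat_one hU1 hτ0 hτ1)
    obtain ⟨M, hM⟩ := my_bound_of_nhds hCc.isClosed.isOpen_compl hinfC
    set t : ℝ := ((M:ℝ)+1)/((M:ℝ)+2) with ht
    have hM1 : (1:ℝ) ≤ (M:ℝ) := by exact_mod_cast M.one_le
    have ht1 : t < 1 := by rw [ht, div_lt_one (by positivity)]; linarith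
    have hthalf : (1:ℝ)/2 < t := by
      rw [ht, div_lt_div_iff₀ (by norm_num) (by positivity)]; linarith
    have hnb : ∀ᶠ y in 𝓝[Set.Icc (0:ℝ) 1] (1:ℝ), t < y :=
      nhdsWithin_le_nhds (Ioi_mem_nhds ht1)
    filter_upwards [hnb, self_mem_nhdsWithin] with y hygt hyI
    show fS y ∈ U
    by_cases hy1 : y = 1
    · rw [hy1]; exact hU1
    · have hy1' : y < 1 := lt_of_le_of_ne hyI.2 hy1
      have hy0 : 0 < y := lt_trans (lt_trans (by norm_num) hthalf) hygt
      have hyinv : y * (1/y) = 1 := by field_simp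
      have h1lt : 1 < 1/y := by nlinarith
      have hlt2 : 1/y < 2 := by
        rw [div_lt_iff₀ hy0]; nlinarith
      -- first digit is 1
      have hNfl : ⌊1/y⌋₊ = 1 := by
        rw [Nat.floor_eq_iff (by positivity)]
        constructor <;> push_cast <;> linarith
      have hd0 : cfSeq y 0 = (((1:ℕ+)) : NInf) := by
        show dbar y = _
        unfold dbar
        rw [if_neg hy0.ne', hNfl]
        rfl
      -- second digit is large
      have hIfl : ⌊1/y⌋ = (1:ℤ) := by
        rw [Int.floor_eq_iff]
        constructor <;> push_cast <;> linarith
      have hTy : Tbar y = 1/y - 1 := by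
        have : Int.fract (1/y) = 1/y - ((1:ℤ):ℝ) := by rw [Int.fract, hIfl]
        simpa [Tbar, hy0.ne'] using this
      have hTy0 : 0 < Tbar y := by rw [hTy]; linarith
      have hTyinv : (M:ℝ) + 1 ≤ 1/(Tbar y) := by
        rw [hTy, le_div_iff₀ (by linarith)]
        have hyt : ((M:ℝ)+1) < ((M:ℝ)+2) * y := by
          have := hygt
          rw [ht, div_lt_iff₀ (by positivity)] at this
          linarith
        nlinarith
      have hdb : dbar (Tbar y) ∈ Cᶜ := my_dbar_large hM hTy0 hTyinv
      have hd1 : cfSeq y 1 = dbar (Tbar y) := by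
        rw [my_cfSeq_succ]; simp [cfSeq]
      have hmem : cfSeq y ∈ gS ⁻¹' U := by
        by_contra hc
        exact hdb ⟨cfSeq y, ⟨hc, hd0⟩, hd1.symm⟩
      rw [my_fS_eq]; exact hmem
end

section
/- Let x ∈ (0,1) be rational, let n ∈ ℕ be such that σ := f(x) ∈ Σ_n, let τ = (d̄_1(x),…,d̄_{n−1}(x), d̄_n(x)−1, 1, ∞, ∞, …) be the other element of φ⁻¹({x}), and let I_n(σ) = {t ∈ [0,1] : d̄_k(t) = σ_k for 1 ≤ k ≤ n} be the fundamental interval of σ. Then f(t) → σ in (Σ, T_Σ) as t → x with t ∈ I_n(σ), and f(t) → τ in (Σ, T_Σ) as t → x with t ∈ [0,1] \ I_n(σ). -/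
open scoped Classical

open Filter Topology

namespace Stmt17Aux

lemma dbar_eq_infty_iff {x : ℝ} : dbar x = OnePoint.infty ↔ x = 0 := by
  constructor
  · intro h
    by_contra hx
    rw [dbar, if_neg hx] at h
    exact OnePoint.coe_ne_infty _ h
  · intro h; simp [dbar, h]

lemma tbar_nonneg (x : ℝ) : 0 ≤ Tbar x := by
  unfold Tbar; split
  · exact le_refl 0
  · exact Int.fract_nonneg _

lemma tbar_lt_one (x : ℝ) : Tbar x < 1 := by
  unfold Tbar; split
  · norm_num
  · exact Int.fract_lt_one _

lemma iter_nonneg {x : ℝ} (hx : 0 ≤ x) (k : ℕ) : 0 ≤ Tbar^[k] x := by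
  cases k with
  | zero => simpa
  | succ k => rw [Function.iterate_succ_apply']; exact tbar_nonneg _

lemma iter_le_one {x : ℝ} (hx : x ≤ 1) (k : ℕ) : Tbar^[k] x ≤ 1 := by
  cases k with
  | zero => simpa
  | succ k => rw [Function.iterate_succ_apply']; exact (tbar_lt_one _).le

lemma cfSeq_def (t : ℝ) (k : ℕ) : cfSeq t k = dbar (Tbar^[k] t) := rfl

lemma one_le_one_div' {u : ℝ} (h0 : 0 < u) (h1 : u ≤ 1) : (1:ℝ) ≤ 1 / u := by
  rw [le_div_iff₀ h0]; linarith

lemma floor_pos' {u : ℝ} (h0 : 0 < u) (h1 : u ≤ 1) : 0 < ⌊1/u⌋₊ :=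
  Nat.floor_pos.mpr (one_le_one_div' h0 h1)

lemma dbar_of_ne {u : ℝ} (hu : u ≠ 0) : dbar u = ((⌊1/u⌋₊.toPNat' : ℕ+) : NInf) := by
  rw [dbar, if_neg hu]

lemma floor_eq_of_dbar_eq {u v : ℝ} (hu0 : 0 < u) (hu1 : u ≤ 1) (hv0 : 0 < v) (hv1 : v ≤ 1)
    (h : dbar u = dbar v) : ⌊1/u⌋₊ = ⌊1/v⌋₊ := by
  rw [dbar_of_ne hu0.ne', dbar_of_ne hv0.ne'] at h
  have h2 : (⌊1/u⌋₊.toPNat' : ℕ+) = ⌊1/v⌋₊.toPNat' := OnePoint.coe_eq_coe.mp h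
  have h3 : ((⌊1/u⌋₊.toPNat' : ℕ+) : ℕ) = ((⌊1/v⌋₊.toPNat' : ℕ+) : ℕ) := congrArg _ h2
  rwa [PNat.toPNat'_coe (floor_pos' hu0 hu1), PNat.toPNat'_coe (floor_pos' hv0 hv1)] at h3

lemma dbar_eq_of_floor_eq {u v : ℝ} (hu0 : u ≠ 0) (hv0 : v ≠ 0)
    (h : ⌊1/u⌋₊ = ⌊1/v⌋₊) : dbar u = dbar v := by
  rw [dbar_of_ne hu0, dbar_of_ne hv0, h]

lemma floor_bounds {u : ℝ} {d : ℕ} (hd : 0 < d) (h : ⌊1/u⌋₊ = d) :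
    (d:ℝ) ≤ 1/u ∧ 1/u < d + 1 :=
  (Nat.floor_eq_iff' hd.ne').mp h

lemma tbar_eq_sub {u : ℝ} {d : ℕ} (hu : 0 < u) (hd : 0 < d) (hfl : ⌊1/u⌋₊ = d) :
    Tbar u = 1/u - d := by
  obtain ⟨h1, h2⟩ := floor_bounds hd hfl
  rw [Tbar, if_neg hu.ne']
  have hz : ⌊(1/u : ℝ)⌋ = (d:ℤ) := by
    rw [Int.floor_eq_iff] <;> constructor <;> push_cast <;> linarith
  rw [Int.fract, hz]
  push_cast; ring

lemma local_step {y : ℝ} (hy0 : 0 < y) (hy1 : y ≤ 1) (hTy : Tbar y ≠ 0) :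
    (∀ᶠ s in nhds y, dbar s = dbar y) ∧ ContinuousAt Tbar y := by
  set d := ⌊1/y⌋₊ with hd
  have hdpos : 0 < d := floor_pos' hy0 hy1
  have hdR : (0:ℝ) < d := by exact_mod_cast hdpos
  have h2 : 1/y < d + 1 := Nat.lt_floor_add_one _
  have h1 : (d:ℝ) < 1/y := by
    rcases lt_or_eq_of_le (Nat.floor_le (by positivity : (0:ℝ) ≤ 1/y)) with h | h
    · exact h
    · exfalso; apply hTy
      rw [Tbar, if_neg hy0.ne', ← h]
      exact Int.fract_natCast d
  have hyV : y ∈ Set.Ioo (1/((d:ℝ)+1)) (1/(d:ℝ)) := by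
    constructor
    · have hh := (div_lt_iff₀ hy0).mp h2
      rw [div_lt_iff₀ (by positivity : (0:ℝ) < (d:ℝ)+1)]
      nlinarith
    · have hh := (lt_div_iff₀ hy0).mp h1
      rw [lt_div_iff₀ hdR]
      nlinarith
  have hkey : ∀ s ∈ Set.Ioo (1/((d:ℝ)+1)) (1/(d:ℝ)), 0 < s ∧ ⌊1/s⌋₊ = d := by
    intro s hs
    have hs0 : 0 < s := lt_trans (by positivity) hs.1
    refine ⟨hs0, ?_⟩
    have hb1 : (d:ℝ) < 1/s := by
      have hh := (lt_div_iff₀ hdR).mp hs.2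
      rw [lt_div_iff₀ hs0]; nlinarith
    have hb2 : 1/s < (d:ℝ) + 1 := by
      have hh := (div_lt_iff₀ (by positivity : (0:ℝ) < (d:ℝ)+1)).mp hs.1
      rw [div_lt_iff₀ hs0]; nlinarith
    exact (Nat.floor_eq_iff' hdpos.ne').mpr ⟨hb1.le, hb2⟩
  have hV : Set.Ioo (1/((d:ℝ)+1)) (1/(d:ℝ)) ∈ nhds y := isOpen_Ioo.mem_nhds hyV
  constructor
  · filter_upwards [hV] with s hs
    obtain ⟨hs0, hfl⟩ := hkey s hs
    exact dbar_eq_of_floor_eq hs0.ne' hy0.ne' (by rw [hfl])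
  · have hc : ContinuousAt (fun s : ℝ => 1/s - d) y :=
      (continuousAt_const.div continuousAt_id hy0.ne').sub continuousAt_const
    apply hc.congr
    filter_upwards [hV] with s hs
    obtain ⟨hs0, hfl⟩ := hkey s hs
    exact (tbar_eq_sub hs0 hdpos hfl).symm

lemma stability {x : ℝ} (hx0 : 0 ≤ x) (hx1 : x ≤ 1) :
    ∀ j : ℕ, (∀ k ≤ j, Tbar^[k] x ≠ 0) →
    (∀ᶠ t in nhds x, ∀ k < j, cfSeq t k = cfSeq x k) ∧
      Filter.Tendsto (fun t => Tbar^[j] t) (nhds x) (nhds (Tbar^[j] x)) := by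
  intro j
  induction j with
  | zero =>
    intro _
    refine ⟨Filter.Eventually.of_forall (fun t k hk => absurd hk (Nat.not_lt_zero k)), ?_⟩
    exact tendsto_id
  | succ j ih =>
    intro h
    obtain ⟨hev, hT⟩ := ih (fun k hk => h k (hk.trans j.le_succ))
    set y := Tbar^[j] x with hy
    have hy0 : 0 < y := lt_of_le_of_ne (iter_nonneg hx0 j) (Ne.symm (h j j.le_succ))
    have hy1 : y ≤ 1 := iter_le_one hx1 j
    have hTy : Tbar y ≠ 0 := by
      have hh := h (j+1) le_rfl
      rwa [Function.iterate_succ_apply'] at hh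
    obtain ⟨hloc, hcont⟩ := local_step hy0 hy1 hTy
    constructor
    · have h2 : ∀ᶠ t in nhds x, dbar (Tbar^[j] t) = dbar y := hT.eventually hloc
      filter_upwards [hev, h2] with t ht1 ht2 k hk
      rcases Nat.lt_succ_iff_lt_or_eq.mp hk with hk' | rfl
      · exact ht1 k hk'
      · exact ht2
    · have h3 := hcont.tendsto.comp hT
      simp only [Function.iterate_succ_apply']
      exact h3

lemma recon : ∀ (m : ℕ) (s u : ℝ), s ∈ Set.Icc (0:ℝ) 1 → u ∈ Set.Icc (0:ℝ) 1 →
    (∀ k < m, cfSeq s k = cfSeq u k) → Tbar^[m] s = Tbar^[m] u → s = u := by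
  intro m
  induction m with
  | zero => intro s u _ _ _ h; simpa using h
  | succ m ih =>
    intro s u hs hu hdig hit
    have h0 := hdig 0 (Nat.succ_pos m)
    rw [cfSeq_def, cfSeq_def] at h0
    simp only [Function.iterate_zero_apply] at h0
    by_cases hs0 : s = 0
    · have hu0 : dbar u = OnePoint.infty := by rw [← h0, hs0]; simp [dbar]
      rw [hs0, dbar_eq_infty_iff.mp hu0]
    · have hu0 : u ≠ 0 := by
        intro h0u
        apply hs0
        apply dbar_eq_infty_iff.mp
        rw [h0]; simp [dbar, h0u]
      have hs0' : 0 < s := lt_of_le_of_ne hs.1 (Ne.symm hs0)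
      have hu0' : 0 < u := lt_of_le_of_ne hu.1 (Ne.symm hu0)
      have hfl : ⌊1/s⌋₊ = ⌊1/u⌋₊ := floor_eq_of_dbar_eq hs0' hs.2 hu0' hu.2 h0
      have hd : 0 < ⌊1/s⌋₊ := floor_pos' hs0' hs.2
      have hts : Tbar s = 1/s - ⌊1/s⌋₊ := tbar_eq_sub hs0' hd rfl
      have htu : Tbar u = 1/u - ⌊1/s⌋₊ := tbar_eq_sub hu0' hd hfl.symm
      have heq : Tbar s = Tbar u := by
        apply ih (Tbar s) (Tbar u) ⟨tbar_nonneg _, (tbar_lt_one _).le⟩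
          ⟨tbar_nonneg _, (tbar_lt_one _).le⟩
        · intro k hk
          have hh := hdig (k+1) (by omega)
          rw [cfSeq_def, cfSeq_def, Function.iterate_succ_apply,
            Function.iterate_succ_apply] at hh
          exact hh
        · rw [← Function.iterate_succ_apply, ← Function.iterate_succ_apply]
          exact hit
      have h1u : 1/s = 1/u := by rw [hts, htu] at heq; linarith
      have := congrArg (fun r : ℝ => 1/r) h1u
      simpa [one_div_one_div] using this

lemma tendsto_infty {v : ℕ → NInf} (h : ∀ N : ℕ, ∀ a : ℕ+, v N = (a:NInf) → N ≤ (a:ℕ)) :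
    Filter.Tendsto v Filter.atTop (nhds (OnePoint.infty)) := by
  rw [OnePoint.hasBasis_nhds_infty.tendsto_right_iff]
  rintro s ⟨-, hsc⟩
  have hfin : s.Finite := isCompact_iff_finite.mp hsc
  obtain ⟨M, hM⟩ := hfin.bddAbove
  filter_upwards [Filter.eventually_ge_atTop ((M:ℕ)+1)] with N hN
  cases hv : v N with
  | none => exact Or.inr rfl
  | some a =>
    left
    refine ⟨a, fun hmem => ?_, rfl⟩
    have h1 : (a:ℕ) ≤ (M:ℕ) := hM hmem
    have h2 := h N a hv
    omega

lemma clusterPt_unique {X : Type*} [TopologicalSpace X] [T2Space X] {F : Filter X} [F.NeBot]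
    {a b : X} (h : ClusterPt a F) (hb : F ≤ nhds b) : a = b :=
  eq_of_nhds_neBot (h.neBot.mono (inf_le_inf_left _ hb))

lemma key {W : Set (ℕ → NInf)} (hW : IsOpen W) (j : ℕ) (base : ℕ → NInf)
    (h : ∀ σ : ℕ → NInf, (∀ k < j, σ k = base k) → σ j = OnePoint.infty → σ ∈ W) :
    ∃ N : ℕ, ∀ σ : ℕ → NInf, (∀ k < j, σ k = base k) →
      (∀ a : ℕ+, σ j = (a:NInf) → N ≤ (a:ℕ)) → σ ∈ W := by
  by_contra hc
  push_neg at hc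
  choose u hu1 hu2 hu3 using hc
  set F := Filter.map u Filter.atTop with hF
  have hFW : F ≤ Filter.principal Wᶜ := by
    rw [hF, Filter.le_principal_iff, Filter.mem_map]
    exact Filter.Eventually.of_forall hu3
  obtain ⟨σ, hcl⟩ := exists_clusterPt_of_compactSpace F
  have hσW : σ ∈ Wᶜ := by
    have h1 : ClusterPt σ (Filter.principal Wᶜ) := hcl.mono hFW
    have h2 : σ ∈ closure Wᶜ := mem_closure_iff_clusterPt.mpr h1
    rwa [hW.isClosed_compl.closure_eq] at h2
  have hcoord : ∀ k : ℕ, ClusterPt (σ k) (Filter.map (fun N => u N k) Filter.atTop) := by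
    intro k
    have hmap : Filter.Tendsto (fun τ : ℕ → NInf => τ k) F
        (Filter.map (fun N => u N k) Filter.atTop) := by
      rw [hF, Filter.tendsto_map'_iff]
      exact Filter.tendsto_map
    exact hcl.map (continuous_apply k).continuousAt hmap
  refine hσW (h σ (fun k hk => ?_) ?_)
  · refine clusterPt_unique (hcoord k) ?_
    have : (fun N => u N k) = fun _ => base k := funext fun N => hu1 N k hk
    rw [this]
    exact tendsto_const_nhds
  · exact clusterPt_unique (hcoord j) (tendsto_infty (fun N a ha => hu2 N a ha))

lemma gmap_eq_self {σ : ℕ → NInf} (h : σ ∈ SigmaSet) : gmap σ = σ := by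
  rcases h with h | h
  · rw [gmap, dif_neg]
    rintro ⟨k, hk⟩
    exact h k hk
  · obtain ⟨m, hm⟩ := Set.mem_iUnion.mp h
    obtain ⟨h1, h2⟩ := hm
    have hex : ∃ k, σ k = OnePoint.infty := ⟨m, h2 m le_rfl⟩
    rw [gmap, dif_pos hex]
    have hfind : Nat.find hex = m := by
      refine le_antisymm (Nat.find_min' hex (h2 m le_rfl)) ?_
      by_contra hlt
      push_neg at hlt
      exact h1 _ hlt (Nat.find_spec hex)
    rw [hfind]
    funext k
    by_cases hk : k < m
    · simp [trunc, hk]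
    · simp only [trunc, if_neg hk]
      exact (h2 k (le_of_not_gt hk)).symm

lemma gS_val_eq {base σ : ℕ → NInf} {j : ℕ} (hfin : ∀ k < j, base k ≠ OnePoint.infty)
    (htail : ∀ k, j ≤ k → base k = OnePoint.infty)
    (hlt : ∀ k < j, σ k = base k) (hj : σ j = OnePoint.infty) : gmap σ = base := by
  have hex : ∃ k, σ k = OnePoint.infty := ⟨j, hj⟩
  have hfind : Nat.find hex = j := by
    refine le_antisymm (Nat.find_min' hex hj) ?_
    by_contra hlt'
    push_neg at hlt'
    exact hfin _ hlt' ((hlt _ hlt') ▸ Nat.find_spec hex)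
  rw [gmap, dif_pos hex, hfind]
  funext k
  by_cases hk : k < j
  · simp [trunc, hk, hlt k hk]
  · simp only [trunc, if_neg hk]
    exact (htail k (le_of_not_gt hk)).symm

lemma tendsto_fS {j : ℕ} {base : ℕ → NInf} (hb : base ∈ SigmaIdx j) (hbS : base ∈ SigmaSet)
    {F : Filter ℝ}
    (hdig : ∀ᶠ t in F, ∀ k < j, cfSeq t k = base k)
    (hbig : ∀ N : ℕ, ∀ᶠ t in F, ∀ a : ℕ+, cfSeq t j = (a:NInf) → N ≤ (a:ℕ)) :
    Filter.Tendsto fS F (nhds (Sig.mk base hbS)) := by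
  rw [tendsto_nhds]
  intro U hU hmemU
  have hWopen : IsOpen (gS ⁻¹' U) := isOpen_coinduced.mp hU
  have hfiber : ∀ σ : ℕ → NInf, (∀ k < j, σ k = base k) → σ j = OnePoint.infty →
      σ ∈ gS ⁻¹' U := by
    intro σ h1 h2
    have hgs : gS σ = Sig.mk base hbS :=
      Subtype.ext (gS_val_eq hb.1 hb.2 h1 h2)
    show gS σ ∈ U
    rw [hgs]
    exact hmemU
  obtain ⟨N, hN⟩ := key hWopen j base hfiber
  have : ∀ᶠ t in F, fS t ∈ U := by
    filter_upwards [hdig, hbig N] with t h1 h2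
    have hmem : cfSeq t ∈ gS ⁻¹' U := hN _ h1 h2
    have hfs : fS t = gS (cfSeq t) := Subtype.ext (gmap_eq_self (cfSeq_mem t)).symm
    rw [hfs]
    exact hmem
  exact this

lemma predNInf_coe (a : ℕ+) : predNInf (a : NInf) = ((a - 1 : ℕ+) : NInf) := rfl

lemma big_of {F : Filter ℝ} {j : ℕ} (h : Filter.Tendsto (fun t => Tbar^[j] t) F (nhds 0))
    (hpos : ∀ᶠ t in F, 0 < Tbar^[j] t) (N : ℕ) :
    ∀ᶠ t in F, ∀ a : ℕ+, cfSeq t j = (a:NInf) → N ≤ (a:ℕ) := by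
  have hsm : ∀ᶠ t in F, Tbar^[j] t < 1/((N:ℝ)+1) :=
    h.eventually_lt_const (by positivity)
  filter_upwards [hpos, hsm] with t hp hlt a ha
  have h2 := (lt_div_iff₀ (by positivity : (0:ℝ) < (N:ℝ)+1)).mp hlt
  have hNle : ((N:ℝ)+1) ≤ 1/(Tbar^[j] t) := by
    rw [le_div_iff₀ hp]; nlinarith
  have hfl : N+1 ≤ ⌊1/(Tbar^[j] t)⌋₊ := Nat.le_floor (by push_cast; linarith)
  rw [cfSeq_def, dbar_of_ne hp.ne'] at ha
  have ha2 := OnePoint.coe_eq_coe.mp ha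
  have hc := PNat.toPNat'_coe (show 0 < ⌊1/(Tbar^[j] t)⌋₊ by omega)
  rw [← ha2, hc]
  omega

end Stmt17Aux

open Stmt17Aux Filter Topology in
/-- One-sided continuity at rationals: for rational `x ∈ (0,1)` with
`σ := f(x) ∈ Σ_n` and `τ` the other continued fraction expansion of `x`, `f(t) → σ` as
`t → x` within the fundamental interval `I_n(σ)`, and `f(t) → τ` as `t → x` within
`[0,1] \ I_n(σ)`. -/
theorem stmt17 (x : ℝ) (hx0 : 0 < x) (hx1 : x < 1) (hxq : ∃ q : ℚ, (q : ℝ) = x)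
    (n : ℕ) (hn : 0 < n) (hσ : cfSeq x ∈ SigmaIdx n) (hτ : tauOf x n ∈ SigmaSet) :
    Filter.Tendsto fS
      (nhdsWithin x ({t | t ∈ Set.Icc (0 : ℝ) 1 ∧ ∀ k < n, cfSeq t k = cfSeq x k} \ {x}))
      (nhds (fS x)) ∧
    Filter.Tendsto fS
      (nhdsWithin x ({t | t ∈ Set.Icc (0 : ℝ) 1 ∧ ¬ ∀ k < n, cfSeq t k = cfSeq x k} \ {x}))
      (nhds (Sig.mk (tauOf x n) hτ)) := by
  clear hxq
  obtain ⟨m, rfl⟩ : ∃ m, n = m + 1 := ⟨n-1, (Nat.succ_pred_eq_of_pos hn).symm⟩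
  have hxI : x ∈ Set.Icc (0:ℝ) 1 := ⟨hx0.le, hx1.le⟩
  have hfin : ∀ k < m+1, cfSeq x k ≠ OnePoint.infty := hσ.1
  have hiter_ne : ∀ k < m+1, Tbar^[k] x ≠ 0 := by
    intro k hk h0
    exact hfin k hk (by rw [cfSeq_def, h0]; simp [dbar])
  set y := Tbar^[m] x with hydef
  have hy0 : 0 < y := lt_of_le_of_ne (iter_nonneg hx0.le m) (Ne.symm (hiter_ne m (by omega)))
  have hy1 : y ≤ 1 := iter_le_one hx1.le m
  set D := ⌊1/y⌋₊ with hD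
  have hDpos : 0 < D := floor_pos' hy0 hy1
  have hTn : Tbar^[m+1] x = 0 := by
    by_contra h0
    have hh := hσ.2 (m+1) le_rfl
    rw [cfSeq_def] at hh
    exact h0 (dbar_eq_infty_iff.mp hh)
  have h1y : 1/y = (D:ℝ) := by
    have hfr : Tbar y = 0 := by rwa [Function.iterate_succ_apply'] at hTn
    rw [Tbar, if_neg hy0.ne'] at hfr
    have hfl : (⌊(1/y:ℝ)⌋ : ℝ) = 1/y := by
      have h' : 1/y - (⌊(1/y:ℝ)⌋:ℝ) = 0 := by rw [Int.self_sub_floor]; exact hfr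
      linarith
    have hi0 : (0:ℤ) ≤ ⌊(1/y:ℝ)⌋ := Int.floor_nonneg.mpr (by positivity)
    have hDZ : (D:ℤ) = ⌊(1/y:ℝ)⌋ := by
      rw [hD, ← Int.floor_toNat, Int.toNat_of_nonneg hi0]
    calc (1/y:ℝ) = (⌊(1/y:ℝ)⌋:ℝ) := hfl.symm
    _ = (D:ℝ) := by rw [← hDZ]; push_cast; rfl
  obtain ⟨hev, hT⟩ := stability hx0.le hx1.le m (fun k hk => hiter_ne k (by omega))
  constructor
  · -- Part 1 : within the fundamental interval
    set S1 := ({t : ℝ | t ∈ Set.Icc (0:ℝ) 1 ∧ ∀ k < m+1, cfSeq t k = cfSeq x k} \ {x})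
      with hS1
    set F1 := nhdsWithin x S1 with hF1
    have hmemS1 : ∀ᶠ t in F1, t ∈ S1 := eventually_mem_nhdsWithin
    have hptS1 : ∀ t ∈ S1, (∀ k < m+1, cfSeq t k = cfSeq x k) ∧
        Tbar^[m+1] t = 1/(Tbar^[m] t) - D ∧ 0 < Tbar^[m+1] t := by
      rintro t ⟨⟨htI, hdig⟩, htx⟩
      have hu0 : Tbar^[m] t ≠ 0 := by
        intro h0
        refine hfin m (by omega) ?_
        rw [← hdig m (by omega), cfSeq_def, h0]
        simp [dbar]
      have hu0' : 0 < Tbar^[m] t := lt_of_le_of_ne (iter_nonneg htI.1 m) (Ne.symm hu0)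
      have hu1 : Tbar^[m] t ≤ 1 := iter_le_one htI.2 m
      have hflt : ⌊1/(Tbar^[m] t)⌋₊ = D := by
        rw [hD]
        exact floor_eq_of_dbar_eq hu0' hu1 hy0 hy1 (hdig m (by omega))
      have heq : Tbar^[m+1] t = 1/(Tbar^[m] t) - D := by
        rw [Function.iterate_succ_apply']
        exact tbar_eq_sub hu0' hDpos hflt
      refine ⟨hdig, heq, ?_⟩
      have hne : Tbar^[m+1] t ≠ 0 := by
        intro h0
        exact htx (recon (m+1) t x htI hxI hdig (by rw [h0, hTn]))
      exact lt_of_le_of_ne (iter_nonneg htI.1 (m+1)) (Ne.symm hne)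
    have hTm1 : Tendsto (fun t => Tbar^[m+1] t) F1 (nhds 0) := by
      have hbase : Tendsto (fun t => 1/(Tbar^[m] t) - (D:ℝ)) F1 (nhds (1/y - D)) :=
        (tendsto_const_nhds.div (hT.mono_left nhdsWithin_le_nhds) hy0.ne').sub
          tendsto_const_nhds
      have hz : 1/y - (D:ℝ) = 0 := by rw [h1y]; ring
      rw [hz] at hbase
      refine Filter.Tendsto.congr' ?_ hbase
      filter_upwards [hmemS1] with t ht
      exact ((hptS1 t ht).2.1).symm
    refine tendsto_fS hσ (cfSeq_mem x) ?_ ?_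
    · filter_upwards [hmemS1] with t ht
      exact (hptS1 t ht).1
    · refine big_of hTm1 ?_
      filter_upwards [hmemS1] with t ht
      exact (hptS1 t ht).2.2
  · -- Part 2 : outside the fundamental interval
    set S2 := ({t : ℝ | t ∈ Set.Icc (0:ℝ) 1 ∧ ¬ ∀ k < m+1, cfSeq t k = cfSeq x k} \ {x})
      with hS2
    set F2 := nhdsWithin x S2 with hF2
    have hmemS2 : ∀ᶠ t in F2, t ∈ S2 := eventually_mem_nhdsWithin
    have hD2 : 2 ≤ D := by
      have hylt : y < 1 := by
        cases m with
        | zero => simpa [hydef] using hx1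
        | succ m' => rw [hydef, Function.iterate_succ_apply']; exact tbar_lt_one _
      have h1 : (1:ℝ) < (D:ℝ) := by
        rw [← h1y, lt_div_iff₀ hy0]; linarith
      have h2 : 1 < D := by exact_mod_cast h1
      omega
    set D' := D - 1 with hD'
    have hD'pos : 0 < D' := by omega
    have hD'R : ((D':ℕ):ℝ) = (D:ℝ) - 1 := by
      rw [hD', Nat.cast_sub (by omega)]; norm_num
    have hDR : (0:ℝ) < (D:ℝ) := by exact_mod_cast hDpos
    have hD2R : (2:ℝ) ≤ (D:ℝ) := by exact_mod_cast hD2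
    have hD1R : (0:ℝ) < (D:ℝ) - 1 := by linarith
    -- the τ digits
    have hτk : ∀ k < m, tauOf x (m+1) k = cfSeq x k := by
      intro k hk
      simp only [tauOf]
      rw [if_pos (by omega)]
    have hτm : tauOf x (m+1) m = ((D'.toPNat' : ℕ+) : NInf) := by
      have hcf : cfSeq x m = ((D.toPNat' : ℕ+) : NInf) := by
        rw [cfSeq_def, ← hydef, dbar_of_ne hy0.ne', ← hD]
      have hstep : tauOf x (m+1) m = (if m + 1 < m + 1 then cfSeq x m
          else if m + 1 = m + 1 then predNInf (cfSeq x m)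
          else if m = m + 1 then ((1:ℕ+):NInf) else OnePoint.infty) := rfl
      rw [hstep, if_neg (lt_irrefl _), if_pos rfl, hcf, predNInf_coe]
      have h2 : ((D.toPNat' : ℕ+):ℕ) = D := PNat.toPNat'_coe hDpos
      have h3 : ((D'.toPNat' : ℕ+):ℕ) = D' := PNat.toPNat'_coe hD'pos
      have h4 : (1:ℕ+) < D.toPNat' := by
        rw [← PNat.coe_lt_coe, h2, PNat.one_coe]; omega
      have hPN : D.toPNat' - 1 = D'.toPNat' := by
        apply PNat.coe_injective
        rw [PNat.sub_coe, if_pos h4, h2, h3, PNat.one_coe]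
      rw [hPN]
    have hτm1 : tauOf x (m+1) (m+1) = ((1 : ℕ+) : NInf) := by
      simp [tauOf]
    have hτIdx : tauOf x (m+1) ∈ SigmaIdx (m+2) := by
      constructor
      · intro k hk
        rcases lt_trichotomy k m with hkm | rfl | hkm
        · rw [hτk k hkm]; exact hfin k (by omega)
        · rw [hτm]; exact OnePoint.coe_ne_infty _
        · have hk1 : k = m+1 := by omega
          rw [hk1, hτm1]; exact OnePoint.coe_ne_infty _
      · intro k hk
        simp only [tauOf]
        rw [if_neg (by omega), if_neg (by omega), if_neg (by omega)]
    -- eventual facts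
    have hev2 : ∀ᶠ t in F2, ∀ k < m, cfSeq t k = cfSeq x k :=
      hev.filter_mono nhdsWithin_le_nhds
    have huT : Tendsto (fun t => Tbar^[m] t) F2 (nhds y) := hT.mono_left nhdsWithin_le_nhds
    have hyD : y = 1/(D:ℝ) := by rw [← h1y, one_div_one_div]
    have hu_lt : ∀ᶠ t in F2, Tbar^[m] t < 1/((D:ℝ)-1) := by
      refine huT.eventually_lt_const ?_
      rw [hyD]
      exact one_div_lt_one_div_of_lt hD1R (by linarith)
    have hu_gt : ∀ᶠ t in F2, 1/((D:ℝ)+1) < Tbar^[m] t := by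
      refine huT.eventually_const_lt ?_
      rw [hyD]
      exact one_div_lt_one_div_of_lt hDR (by linarith)
    -- pointwise consequences, step A
    have hptA : ∀ t, t ∈ S2 → (∀ k < m, cfSeq t k = cfSeq x k) →
        Tbar^[m] t < 1/((D:ℝ)-1) → 1/((D:ℝ)+1) < Tbar^[m] t →
        cfSeq t m = ((D'.toPNat' : ℕ+) : NInf) ∧
          Tbar^[m+1] t = 1/(Tbar^[m] t) - D' ∧ Tbar^[m+1] t < 1 := by
      rintro t ⟨⟨htI, hnot⟩, htx⟩ hdigs hlt hgt
      have hu0' : 0 < Tbar^[m] t := lt_trans (by positivity) hgt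
      have hu1 : Tbar^[m] t ≤ 1 := iter_le_one htI.2 m
      have hmis : cfSeq t m ≠ cfSeq x m := by
        intro heq
        exact hnot (fun k hk => by
          rcases Nat.lt_succ_iff_lt_or_eq.mp hk with hk' | rfl
          · exact hdigs k hk'
          · exact heq)
      have hugtD : 1/(D:ℝ) < Tbar^[m] t := by
        by_contra hle
        push_neg at hle
        have hb0 := (le_div_iff₀ hDR).mp hle
        have hb1 : (D:ℝ) ≤ 1/(Tbar^[m] t) := by
          rw [le_div_iff₀ hu0']; nlinarith
        have hb2' := (div_lt_iff₀ (by positivity : (0:ℝ) < (D:ℝ)+1)).mp hgt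
        have hb2 : 1/(Tbar^[m] t) < (D:ℝ)+1 := by
          rw [div_lt_iff₀ hu0']; nlinarith
        have hflD : ⌊1/(Tbar^[m] t)⌋₊ = D := (Nat.floor_eq_iff' hDpos.ne').mpr ⟨hb1, hb2⟩
        exact hmis (dbar_eq_of_floor_eq hu0'.ne' hy0.ne' (by rw [hflD, hD]))
      have hfl' : ⌊1/(Tbar^[m] t)⌋₊ = D' := by
        apply (Nat.floor_eq_iff' hD'pos.ne').mpr
        have ha1 := (lt_div_iff₀ hD1R).mp hlt
        constructor
        · rw [hD'R, le_div_iff₀ hu0']; nlinarith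
        · have h1D : 1/(Tbar^[m] t) < (D:ℝ) := by
            rw [div_lt_iff₀ hu0']
            have := (div_lt_iff₀ hDR).mp hugtD
            nlinarith
          rw [hD'R]; linarith
      refine ⟨?_, ?_, ?_⟩
      · rw [cfSeq_def, dbar_of_ne hu0'.ne', hfl']
      · rw [Function.iterate_succ_apply']
        exact tbar_eq_sub hu0' hD'pos hfl'
      · rw [Function.iterate_succ_apply']
        exact tbar_lt_one _
    have hA : ∀ᶠ t in F2, cfSeq t m = ((D'.toPNat' : ℕ+) : NInf) ∧
        Tbar^[m+1] t = 1/(Tbar^[m] t) - D' ∧ Tbar^[m+1] t < 1 := by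
      filter_upwards [hmemS2, hev2, hu_lt, hu_gt] with t h1 h2 h3 h4
      exact hptA t h1 h2 h3 h4
    have hwT : Tendsto (fun t => Tbar^[m+1] t) F2 (nhds 1) := by
      have hbase : Tendsto (fun t => 1/(Tbar^[m] t) - (D':ℝ)) F2 (nhds (1/y - D')) :=
        (tendsto_const_nhds.div huT hy0.ne').sub tendsto_const_nhds
      have hz : 1/y - ((D':ℕ):ℝ) = 1 := by rw [h1y, hD'R]; ring
      rw [hz] at hbase
      refine Filter.Tendsto.congr' ?_ hbase
      filter_upwards [hA] with t ht
      exact ht.2.1.symm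
    have hw_gt : ∀ᶠ t in F2, (1:ℝ)/2 < Tbar^[m+1] t := hwT.eventually_const_lt (by norm_num)
    have hB : ∀ᶠ t in F2, cfSeq t (m+1) = ((1:ℕ+):NInf) ∧
        Tbar^[m+2] t = 1/(Tbar^[m+1] t) - 1 ∧ 0 < Tbar^[m+2] t := by
      filter_upwards [hA, hw_gt] with t ht hw
      have hlt1 := ht.2.2
      have hw0 : 0 < Tbar^[m+1] t := lt_trans (by norm_num) hw
      have hfl1 : ⌊1/(Tbar^[m+1] t)⌋₊ = 1 := by
        apply (Nat.floor_eq_iff' one_ne_zero).mpr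
        constructor
        · push_cast
          rw [le_div_iff₀ hw0]; linarith
        · push_cast
          rw [div_lt_iff₀ hw0]; linarith
      have hsub : Tbar^[m+2] t = 1/(Tbar^[m+1] t) - 1 := by
        rw [show m+2 = (m+1)+1 from rfl, Function.iterate_succ_apply']
        have hh := tbar_eq_sub hw0 one_pos hfl1
        push_cast at hh
        exact hh
      refine ⟨?_, hsub, ?_⟩
      · rw [cfSeq_def, dbar_of_ne hw0.ne', hfl1]
        rfl
      · have h1w : 1 < 1/(Tbar^[m+1] t) := by rw [lt_div_iff₀ hw0]; linarith
        rw [hsub]; linarith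
    have hzT : Tendsto (fun t => Tbar^[m+2] t) F2 (nhds 0) := by
      have hbase : Tendsto (fun t => 1/(Tbar^[m+1] t) - (1:ℝ)) F2 (nhds (1/1 - 1)) :=
        (tendsto_const_nhds.div hwT one_ne_zero).sub tendsto_const_nhds
      have h01 : (1:ℝ)/1 - 1 = 0 := by norm_num
      rw [h01] at hbase
      refine Filter.Tendsto.congr' ?_ hbase
      filter_upwards [hB] with t ht
      exact ht.2.1.symm
    refine tendsto_fS hτIdx hτ ?_ ?_
    · filter_upwards [hev2, hA, hB] with t h1 h2 h3 k hk
      rcases Nat.lt_succ_iff_lt_or_eq.mp hk with hk' | rfl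
      · rcases Nat.lt_succ_iff_lt_or_eq.mp hk' with hk'' | rfl
        · rw [hτk k hk'']; exact h1 k hk''
        · rw [hτm]; exact h2.1
      · rw [hτm1]; exact h3.1
    · refine big_of hzT ?_
      filter_upwards [hB] with t ht
      exact ht.2.2
end
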